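/- arXiv:0801.2530 — 6 statements merged into one kernel-verified Lean document; each statement's English description precedes it below -/
import Mathlib

section
/- Let f be an expansive homeomorphism of a compact metric space M with expansivity constant r₀ > 0 (i.e., if d(fⁿx, fⁿy) < r₀ for all n ∈ ℤ then x = y). Let P be a finite collection of pairwise disjoint open sets whose union is dense in M, each of diameter strictly less than r₀. Then for every sequence A ∈ Σ(f,P) := {A ∈ P^ℤ : for all n ≤ m, A_n ∩ f⁻¹A_{n+1} ∩ … ∩ f^{-(m-n)}A_m ≠ ∅}, the intersection ⋂_{n∈ℤ} f⁻ⁿ(closure A_n) consists of exactly one point. -/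
/-- For an expansive homeomorphism `f` with expansivity constant `r₀` and a
finite collection `P` of pairwise disjoint open sets of diameter `< r₀` with dense union,
every sequence in `Σ(f,P)` (all finite cylinders nonempty) codes exactly one point:
`⋂ₙ f⁻ⁿ(closure A_n)` is a singleton. -/
theorem stmt_0 {M : Type*} [MetricSpace M] [CompactSpace M]
    (f : Equiv.Perm M) (hf : Continuous f) (hf' : Continuous f.symm) (r₀ : ℝ) (hr₀ : 0 < r₀)
    (hexp : ∀ x y : M, (∀ n : ℤ, dist ((f ^ n) x) ((f ^ n) y) < r₀) → x = y)
    (ι : Type*) [Fintype ι] (P : ι → Set M)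
    (hopen : ∀ i, IsOpen (P i))
    (hdisj : ∀ i j, i ≠ j → Disjoint (P i) (P j))
    (hdense : Dense (⋃ i, P i))
    (hdiam : ∀ i, Metric.diam (P i) < r₀)
    (A : ℤ → ι)
    (hA : ∀ n m : ℤ, n ≤ m →
      (⋂ k ∈ Set.Icc n m, (⇑(f ^ (k - n)) ⁻¹' P (A k))).Nonempty) :
    ∃ x : M, (⋂ n : ℤ, ⇑(f ^ n) ⁻¹' closure (P (A n))) = {x} := by
  have hcont : ∀ n : ℤ, Continuous ⇑(f ^ n) := by
    intro n
    induction n using Int.induction_on with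
    | zero => simpa using continuous_id
    | succ m ih =>
        have h : (f ^ ((m : ℤ) + 1)) = f ^ (m : ℤ) * f := by rw [zpow_add_one]
        rw [h]
        simpa [Equiv.Perm.coe_mul] using ih.comp hf
    | pred m ih =>
        have h : (f ^ (-(m : ℤ) - 1)) = f ^ (-(m : ℤ)) * f⁻¹ := by rw [zpow_sub_one]
        rw [h]
        have hinv : Continuous ⇑(f⁻¹ : Equiv.Perm M) := by
          simpa [Equiv.Perm.inv_def] using hf'
        simpa [Equiv.Perm.coe_mul] using ih.comp hinv
  set C : ℕ → Set M :=
    fun N => ⋂ n ∈ Set.Icc (-(N : ℤ)) (N : ℤ), (⇑(f ^ n)) ⁻¹' closure (P (A n)) with hCdef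
  have hclosed : ∀ N, IsClosed (C N) := fun N =>
    isClosed_biInter fun n _ => isClosed_closure.preimage (hcont n)
  have hne : ∀ N, (C N).Nonempty := by
    intro N
    obtain ⟨z, hz⟩ := hA (-(N : ℤ)) N (by omega)
    refine ⟨(f ^ (N : ℤ)) z, Set.mem_iInter₂.mpr fun n hn => ?_⟩
    have hz' := Set.mem_iInter₂.mp hz n hn
    have he : (f ^ n) ((f ^ (N : ℤ)) z) = (f ^ (n - -(N : ℤ))) z := by
      rw [show n - -(N : ℤ) = n + N by ring, zpow_add, Equiv.Perm.mul_apply]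
    rw [Set.mem_preimage, he]
    exact subset_closure hz'
  have hmono : ∀ N, C (N + 1) ⊆ C N := by
    intro N x hx
    refine Set.mem_iInter₂.mpr fun n hn => Set.mem_iInter₂.mp hx n ?_
    simp only [Set.mem_Icc] at hn ⊢
    push_cast
    omega
  obtain ⟨x, hx⟩ := IsCompact.nonempty_iInter_of_sequence_nonempty_isCompact_isClosed
    C hmono hne ((hclosed 0).isCompact) hclosed
  have hxmem : x ∈ ⋂ n : ℤ, ⇑(f ^ n) ⁻¹' closure (P (A n)) := by
    refine Set.mem_iInter.mpr fun n => ?_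
    exact Set.mem_iInter₂.mp (Set.mem_iInter.mp hx n.natAbs) n
      (by simp only [Set.mem_Icc]; omega)
  refine ⟨x, Set.eq_singleton_iff_unique_mem.mpr ⟨hxmem, ?_⟩⟩
  intro y hy
  apply hexp y x
  intro n
  have hy' := Set.mem_iInter.mp hy n
  have hx' := Set.mem_iInter.mp hxmem n
  calc dist ((f ^ n) y) ((f ^ n) x) ≤ Metric.diam (closure (P (A n))) :=
        Metric.dist_le_diam_of_mem ((isCompact_univ.isBounded).subset (Set.subset_univ _)) hy' hx'
    _ = Metric.diam (P (A n)) := Metric.diam_closure _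
    _ < r₀ := hdiam _
end

section
/- Let f be an expansive homeomorphism of a compact metric space M with expansivity constant r₀, and let P be a finite collection of pairwise disjoint open sets of diameter < r₀ with dense union. Define p : Σ(f,P) → M by {p(A)} = ⋂_{n∈ℤ} f⁻ⁿ(closure A_n). Then p is continuous and satisfies p ∘ σ = f ∘ p, where σ is the left shift on Σ(f,P). -/
lemma zpow_cont {M : Type*} [TopologicalSpace M] (f : Equiv.Perm M)
    (hf : Continuous f) (hf' : Continuous f.symm) (n : ℤ) :
    Continuous ⇑(f ^ n) := by
  induction n using Int.induction_on with
  | zero => simp only [zpow_zero]; exact continuous_id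
  | succ n ih =>
    have h : (f ^ ((n : ℤ) + 1)) = f ^ (n : ℤ) * f := zpow_add_one f n
    have : ⇑(f ^ ((n : ℤ) + 1)) = ⇑(f ^ (n : ℤ)) ∘ ⇑f := by
      rw [h]; rfl
    rw [this]; exact ih.comp hf
  | pred n ih =>
    have h : (f ^ (-(n : ℤ) - 1)) = f ^ (-(n : ℤ)) * f⁻¹ := zpow_sub_one f _
    have : ⇑(f ^ (-(n : ℤ) - 1)) = ⇑(f ^ (-(n : ℤ))) ∘ ⇑f.symm := by
      rw [h]; rfl
    rw [this]; exact ih.comp hf'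

/-- the coding map `p : Σ(f,P) → M`, defined by
`{p A} = ⋂ₙ f⁻ⁿ(closure A_n)`, is continuous and satisfies `p ∘ σ = f ∘ p`. -/
theorem stmt_1 {M : Type*} [MetricSpace M] [CompactSpace M]
    (f : Equiv.Perm M) (hf : Continuous f) (hf' : Continuous f.symm)
    (r₀ : ℝ) (hr₀ : 0 < r₀)
    (hexp : ∀ x y : M, (∀ n : ℤ, dist ((f ^ n) x) ((f ^ n) y) < r₀) → x = y)
    (ι : Type*) [Fintype ι] [TopologicalSpace ι] [DiscreteTopology ι]
    (P : ι → Set M)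
    (hopen : ∀ i, IsOpen (P i))
    (hdisj : ∀ i j, i ≠ j → Disjoint (P i) (P j))
    (hdense : Dense (⋃ i, P i))
    (hdiam : ∀ i, Metric.diam (P i) < r₀)
    -- the symbolic space Σ(f,P), as a subtype of the full shift with product topology
    (Sig : Set (ℤ → ι))
    (hSig : Sig = {A : ℤ → ι | ∀ n m : ℤ, n ≤ m →
      (⋂ k ∈ Set.Icc n m, (⇑(f ^ (k - n)) ⁻¹' P (A k))).Nonempty})
    (p : Sig → M)
    (hp : ∀ A : Sig, (⋂ n : ℤ, ⇑(f ^ n) ⁻¹' closure (P (A.1 n))) = {p A}) :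
    Continuous p ∧
      ∀ A : Sig, ∃ hσA : (fun n => A.1 (n + 1)) ∈ Sig,
        p ⟨fun n => A.1 (n + 1), hσA⟩ = f (p A) := by
  have hmem : ∀ (B : Sig) (n : ℤ), p B ∈ (⇑(f ^ n)) ⁻¹' closure (P (B.1 n)) := by
    intro B n
    have h2 : p B ∈ ({p B} : Set M) := rfl
    rw [← hp B] at h2
    exact Set.mem_iInter.mp h2 n
  constructor
  · -- continuity
    by_cases hι : Nonempty ι
    · haveI := hι
      have hex : ∃ r₁ : ℝ, r₁ < r₀ ∧ ∀ i, Metric.diam (P i) ≤ r₁ := by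
        refine ⟨(Finset.univ : Finset ι).sup' Finset.univ_nonempty
          (fun i => Metric.diam (P i)), ?_, ?_⟩
        · exact (Finset.sup'_lt_iff (s := (Finset.univ : Finset ι))
            (f := fun i => Metric.diam (P i)) Finset.univ_nonempty).mpr fun i _ => hdiam i
        · intro i
          exact Finset.le_sup' (fun j => Metric.diam (P j)) (Finset.mem_univ i)
      obtain ⟨r₁, hr₁lt, hr₁le⟩ := hex
      -- key uniform lemma
      have key : ∀ ε > 0, ∃ N : ℕ, ∀ x y : M,
          (∀ n : ℤ, |n| ≤ (N : ℤ) → dist ((f ^ n) x) ((f ^ n) y) ≤ r₁) →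
          dist x y < ε := by
        by_contra hcon
        push_neg at hcon
        obtain ⟨ε, hε, hN⟩ := hcon
        choose x y hxy hdist using hN
        obtain ⟨z, -, φ, hφ, hz⟩ := isCompact_univ.tendsto_subseq
          (x := fun N => (x N, y N)) (fun N => Set.mem_univ _)
        have ha : Filter.Tendsto (fun N => x (φ N)) Filter.atTop (nhds z.1) :=
          (continuous_fst.tendsto z).comp hz
        have hb : Filter.Tendsto (fun N => y (φ N)) Filter.atTop (nhds z.2) :=
          (continuous_snd.tendsto z).comp hz
        have hab : z.1 = z.2 := by
          apply hexp
          intro n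
          have hc := zpow_cont f hf hf' n
          have htd : Filter.Tendsto
              (fun N => dist ((f ^ n) (x (φ N))) ((f ^ n) (y (φ N))))
              Filter.atTop (nhds (dist ((f ^ n) z.1) ((f ^ n) z.2))) :=
            (((hc.tendsto z.1).comp ha).dist ((hc.tendsto z.2).comp hb))
          have hle : dist ((f ^ n) z.1) ((f ^ n) z.2) ≤ r₁ := by
            apply le_of_tendsto htd
            filter_upwards [Filter.eventually_ge_atTop n.natAbs] with N hNn
            apply hxy
            rw [Int.abs_eq_natAbs]
            exact_mod_cast le_trans hNn hφ.le_apply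
          exact lt_of_le_of_lt hle hr₁lt
        have hεle : ε ≤ dist z.1 z.2 := by
          apply ge_of_tendsto (ha.dist hb)
          filter_upwards with N using hdist (φ N)
        rw [hab, dist_self] at hεle
        exact absurd hεle (not_le.mpr hε)
      -- continuity via the key lemma
      rw [continuous_iff_continuousAt]
      intro A
      rw [ContinuousAt, Metric.tendsto_nhds]
      intro ε hε
      obtain ⟨N, hkey⟩ := key ε hε
      have hbdd : ∀ i, Bornology.IsBounded (closure (P i)) :=
        fun i => isCompact_univ.isBounded.subset (Set.subset_univ _)
      have hev : ∀ᶠ B : Sig in nhds A,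
          ∀ n ∈ Finset.Icc (-(N : ℤ)) (N : ℤ), B.1 n = A.1 n := by
        have hUeq : {g : ℤ → ι | ∀ n ∈ Finset.Icc (-(N : ℤ)) (N : ℤ), g n = A.1 n}
            = ⋂ n ∈ Finset.Icc (-(N : ℤ)) (N : ℤ),
              (fun g : ℤ → ι => g n) ⁻¹' {A.1 n} := by
          ext g; simp
        have hU : IsOpen {g : ℤ → ι | ∀ n ∈ Finset.Icc (-(N : ℤ)) (N : ℤ), g n = A.1 n} := by
          rw [hUeq]
          exact isOpen_biInter_finset fun n _ =>
            (continuous_apply n).isOpen_preimage _ (isOpen_discrete _)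
        have hmemU : A.1 ∈ {g : ℤ → ι | ∀ n ∈ Finset.Icc (-(N : ℤ)) (N : ℤ), g n = A.1 n} := by
          intro n _; rfl
        exact (continuous_subtype_val.tendsto A).eventually (hU.eventually_mem hmemU)
      filter_upwards [hev] with B hB
      apply hkey
      intro n hn
      have hn' : n ∈ Finset.Icc (-(N : ℤ)) (N : ℤ) := by
        rw [Finset.mem_Icc]; exact abs_le.mp hn
      have h1 := hmem B n
      have h2 := hmem A n
      rw [hB n hn'] at h1
      calc dist ((f ^ n) (p B)) ((f ^ n) (p A))
          ≤ Metric.diam (closure (P (A.1 n))) :=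
            Metric.dist_le_diam_of_mem (hbdd _) h1 h2
        _ = Metric.diam (P (A.1 n)) := Metric.diam_closure _
        _ ≤ r₁ := hr₁le _
    · haveI : IsEmpty ι := not_nonempty_iff.mp hι
      haveI : IsEmpty Sig := ⟨fun A => IsEmpty.false (A.1 0)⟩
      rw [continuous_def]
      intro s _
      rw [Set.eq_empty_of_isEmpty (p ⁻¹' s)]
      exact isOpen_empty
  · -- equivariance
    intro A
    have hSig' := Set.ext_iff.mp hSig
    have hA := (hSig' A.1).mp A.2
    have hσ : (fun n => A.1 (n + 1)) ∈ Sig := by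
      refine (hSig' _).mpr ?_
      intro n m hnm
      obtain ⟨x, hx⟩ := hA (n + 1) (m + 1) (by omega)
      refine ⟨x, ?_⟩
      simp only [Set.mem_iInter] at hx ⊢
      intro k hk
      have hk' : k + 1 ∈ Set.Icc (n + 1) (m + 1) := by
        simp only [Set.mem_Icc] at hk ⊢; omega
      have := hx (k + 1) hk'
      have he : k + 1 - (n + 1) = k - n := by ring
      rwa [he] at this
    refine ⟨hσ, ?_⟩
    have h1 := hp ⟨_, hσ⟩
    have h2 : f (p A) ∈ ⋂ n : ℤ, ⇑(f ^ n) ⁻¹' closure (P (A.1 (n + 1))) := by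
      rw [Set.mem_iInter]
      intro n
      have h3 : (f ^ (n + 1)) (p A) ∈ closure (P (A.1 (n + 1))) := hmem A (n + 1)
      rw [zpow_add_one, Equiv.Perm.mul_apply] at h3
      exact h3
    rw [h1] at h2
    exact (Set.mem_singleton_iff.mp h2).symm
end

section
/- Let f be an expansive homeomorphism with expansivity constant r₀ of a compact metric space M, and P a finite collection of disjoint open sets of diameter < r₀ with dense union. Suppose that for every n ≥ 1 the iterated partition Pⁿ := {A₀ ∩ f⁻¹A₁ ∩ … ∩ f^{-(n-1)}A_{n-1} ≠ ∅} has local multiplicity at most 4, i.e., every point of M lies in the closure of at most 4 elements of Pⁿ. Then the coding map p : Σ(f,P) → M satisfies #p⁻¹(x) ≤ 4 for every x ∈ M. -/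
/-- if every iterated partition `Pⁿ` has local multiplicity at most 4
(every point lies in the closure of at most 4 nonempty `n`-cylinders), then the coding
map `p : Σ(f,P) → M` is at most 4-to-1. -/
theorem stmt_2 {M : Type*} [MetricSpace M] [CompactSpace M]
    (f : Equiv.Perm M) (hf : Continuous f) (hf' : Continuous f.symm)
    (r₀ : ℝ) (hr₀ : 0 < r₀)
    (hexp : ∀ x y : M, (∀ n : ℤ, dist ((f ^ n) x) ((f ^ n) y) < r₀) → x = y)
    (ι : Type*) [Fintype ι] (P : ι → Set M)
    (hopen : ∀ i, IsOpen (P i))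
    (hdisj : ∀ i j, i ≠ j → Disjoint (P i) (P j))
    (hdense : Dense (⋃ i, P i))
    (hdiam : ∀ i, Metric.diam (P i) < r₀)
    -- local multiplicity of the iterated partitions is at most 4
    (hmult : ∀ n : ℕ, 1 ≤ n → ∀ x : M,
      Set.ncard {w : Fin n → ι |
        (⋂ k : Fin n, ⇑(f ^ (k : ℤ)) ⁻¹' P (w k)).Nonempty ∧
        x ∈ closure (⋂ k : Fin n, ⇑(f ^ (k : ℤ)) ⁻¹' P (w k))} ≤ 4)
    (Sig : Set (ℤ → ι))
    (hSig : Sig = {A : ℤ → ι | ∀ n m : ℤ, n ≤ m →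
      (⋂ k ∈ Set.Icc n m, (⇑(f ^ (k - n)) ⁻¹' P (A k))).Nonempty})
    (p : Sig → M)
    (hp : ∀ A : Sig, (⋂ n : ℤ, ⇑(f ^ n) ⁻¹' closure (P (A.1 n))) = {p A}) :
    ∀ x : M, (p ⁻¹' {x}).Finite ∧ (p ⁻¹' {x}).ncard ≤ 4 := by
  classical
  -- continuity of all integer powers of f
  have hcontn : ∀ (g : Equiv.Perm M), Continuous ⇑g → ∀ m : ℕ, Continuous ⇑(g ^ m) := by
    intro g hg m
    induction m with
    | zero => simpa using continuous_id
    | succ k ih =>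
        rw [pow_succ]
        simpa [Equiv.Perm.coe_mul] using ih.comp hg
  have hcont : ∀ a : ℤ, Continuous ⇑(f ^ a) := by
    intro a
    induction a using Int.rec with
    | ofNat n => simpa [zpow_natCast] using hcontn f hf n
    | negSucc n =>
        have h1 : (f ^ (Int.negSucc n)) = (f⁻¹) ^ (n + 1) := by
          rw [zpow_negSucc, inv_pow]
        rw [h1]
        exact hcontn f⁻¹ hf' (n + 1)
  -- composition of powers
  have hmulz : ∀ (u v : ℤ) (y : M), (f ^ u) ((f ^ v) y) = (f ^ (u + v)) y := by
    intro u v y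
    rw [zpow_add, Equiv.Perm.mul_apply]
  intro x
  -- window cylinders are nonempty
  have hB : ∀ A : ↥Sig, ∀ c d : ℤ, c ≤ d →
      (⋂ k ∈ Set.Icc c d, ⇑(f ^ k) ⁻¹' P (A.1 k)).Nonempty := by
    intro A c d hcd
    have hA : (A : ℤ → ι) ∈ {A : ℤ → ι | ∀ n m : ℤ, n ≤ m →
        (⋂ k ∈ Set.Icc n m, (⇑(f ^ (k - n)) ⁻¹' P (A k))).Nonempty} := by
      rw [← hSig]; exact A.2
    obtain ⟨y, hy⟩ := hA c d hcd
    refine ⟨(f ^ (-c)) y, ?_⟩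
    rw [Set.mem_iInter₂]
    intro k hk
    have hy' := Set.mem_iInter₂.mp hy k hk
    simp only [Set.mem_preimage] at hy' ⊢
    rw [hmulz k (-c) y]
    simpa [Int.sub_eq_add_neg] using hy'
  -- every point of the fiber: x in closure of each window cylinder
  have hC : ∀ A : ↥Sig, p A = x → ∀ c d : ℤ, c ≤ d →
      x ∈ closure (⋂ k ∈ Set.Icc c d, ⇑(f ^ k) ⁻¹' P (A.1 k)) := by
    intro A hpA c d hcd
    set D := ⋂ k ∈ Set.Icc c d, ⇑(f ^ k) ⁻¹' P (A.1 k) with hD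
    set E : ℕ → Set M := fun N =>
      ⋂ k ∈ Set.Icc (-(N : ℤ)) (N : ℤ), ⇑(f ^ k) ⁻¹' closure (P (A.1 k)) with hE
    have hEclosed : ∀ N, IsClosed (E N) := by
      intro N
      exact isClosed_biInter fun k _ => (isClosed_closure).preimage (hcont k)
    have hEsub : ∀ y, (∀ N, y ∈ E N) → y = x := by
      intro y hy
      have : y ∈ ⋂ n : ℤ, ⇑(f ^ n) ⁻¹' closure (P (A.1 n)) := by
        rw [Set.mem_iInter]
        intro k
        exact Set.mem_iInter₂.mp (hy k.natAbs) k
          (by simp only [Set.mem_Icc]; omega)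
      rw [hp A, hpA] at this
      exact this
    rw [mem_closure_iff]
    intro U hU hxU
    -- compactness: some E N ⊆ U
    have hcompl : IsCompact Uᶜ := (hU.isClosed_compl).isCompact
    have hinter : Uᶜ ∩ ⋂ N, E N = ∅ := by
      ext y
      simp only [Set.mem_inter_iff, Set.mem_iInter, Set.mem_empty_iff_false, iff_false]
      rintro ⟨hyc, hyE⟩
      exact hyc (hEsub y hyE ▸ hxU)
    obtain ⟨u, hu⟩ := hcompl.elim_finite_subfamily_closed E hEclosed hinter
    set N₀ : ℕ := u.sup id with hN₀
    have hanti : ∀ N ∈ u, E N₀ ⊆ E N := by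
      intro N hN
      have hle : N ≤ N₀ := Finset.le_sup (f := id) hN
      intro y hy
      rw [hE, Set.mem_iInter₂] at hy ⊢
      intro k hk
      apply hy k
      simp only [Set.mem_Icc] at hk ⊢
      omega
    have hEU : E N₀ ⊆ U := by
      intro y hy
      by_contra hyU
      have : y ∈ Uᶜ ∩ ⋂ N ∈ u, E N := ⟨hyU, Set.mem_iInter₂.mpr fun N hN => hanti N hN hy⟩
      rw [hu] at this
      exact this
    -- take a point of a large window cylinder
    obtain ⟨y, hy⟩ := hB A (min c (-(N₀ : ℤ))) (max d (N₀ : ℤ))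
      (le_trans (min_le_left _ _) (le_trans hcd (le_max_left _ _)))
    refine ⟨y, ?_, ?_⟩
    · apply hEU
      rw [hE, Set.mem_iInter₂]
      intro k hk
      have := Set.mem_iInter₂.mp hy k ⟨le_trans (min_le_right _ _) hk.1,
        le_trans hk.2 (le_max_right _ _)⟩
      exact subset_closure this
    · rw [hD, Set.mem_iInter₂]
      intro k hk
      exact Set.mem_iInter₂.mp hy k ⟨le_trans (min_le_left _ _) hk.1,
        le_trans hk.2 (le_max_left _ _)⟩
  -- the key word lemma
  have hkey : ∀ A : ↥Sig, p A = x → ∀ (a : ℤ) (n : ℕ), 1 ≤ n →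
      (fun k : Fin n => A.1 (a + (k : ℤ))) ∈ {w : Fin n → ι |
        (⋂ k : Fin n, ⇑(f ^ (k : ℤ)) ⁻¹' P (w k)).Nonempty ∧
        (f ^ a) x ∈ closure (⋂ k : Fin n, ⇑(f ^ (k : ℤ)) ⁻¹' P (w k))} := by
    intro A hpA a n hn
    have hab : a ≤ a + (n : ℤ) - 1 := by omega
    set D := ⋂ k ∈ Set.Icc a (a + (n : ℤ) - 1), ⇑(f ^ k) ⁻¹' P (A.1 k) with hD
    set C0 := ⋂ k : Fin n, ⇑(f ^ (k : ℤ)) ⁻¹' P (A.1 (a + (k : ℤ))) with hC0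
    have hmaps : Set.MapsTo ⇑(f ^ a) D C0 := by
      intro z hz
      rw [hC0, Set.mem_iInter]
      intro k
      simp only [Set.mem_preimage]
      rw [hmulz (k : ℤ) a z]
      have hk : a + (k : ℤ) ∈ Set.Icc a (a + (n : ℤ) - 1) := by
        have := k.2
        simp only [Set.mem_Icc]
        omega
      have := Set.mem_iInter₂.mp hz (a + (k : ℤ)) hk
      simpa [add_comm] using this
    constructor
    · obtain ⟨y, hy⟩ := hB A a (a + (n : ℤ) - 1) hab
      exact ⟨(f ^ a) y, hmaps hy⟩
    · exact map_mem_closure (hcont a) (hC A hpA a (a + (n : ℤ) - 1) hab) hmaps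
  -- the uniform finset bound
  have L : ∀ t : Finset ↥Sig, ↑t ⊆ p ⁻¹' {x} → t.card ≤ 4 := by
    intro t ht
    set g : ↥Sig → ↥Sig → ℤ := fun A B =>
      if h : A = B then 0
      else Classical.choose (Function.ne_iff.mp (Subtype.coe_injective.ne h)) with hgdef
    have hg : ∀ A B : ↥Sig, A ≠ B → A.1 (g A B) ≠ B.1 (g A B) := by
      intro A B h
      simp only [hgdef, dif_neg h]
      exact Classical.choose_spec (Function.ne_iff.mp (Subtype.coe_injective.ne h))
    set m : ℕ := (t ×ˢ t).sup (fun q => (g q.1 q.2).natAbs) with hm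
    set a : ℤ := -(m : ℤ) with ha
    set n : ℕ := 2 * m + 1 with hn
    set Φ : ↥Sig → (Fin n → ι) := fun A k => A.1 (a + (k : ℤ)) with hΦ
    have hinj : Set.InjOn Φ ↑t := by
      intro A hA B hB hEq
      by_contra h
      have hk : (g A B).natAbs ≤ m :=
        Finset.le_sup (f := fun q : ↥Sig × ↥Sig => (g q.1 q.2).natAbs) (b := (A, B))
          (Finset.mem_product.mpr ⟨Finset.mem_coe.mp hA, Finset.mem_coe.mp hB⟩)
      set k : ℤ := g A B with hkdef
      have hj : (k + (m : ℤ)).toNat < n := by omega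
      have := congrFun hEq ⟨(k + (m : ℤ)).toNat, hj⟩
      simp only [hΦ] at this
      have hak : a + (((k + (m : ℤ)).toNat : ℕ) : ℤ) = k := by omega
      rw [hak] at this
      exact hg A B h this
    have himg : Φ '' ↑t ⊆ {w : Fin n → ι |
        (⋂ k : Fin n, ⇑(f ^ (k : ℤ)) ⁻¹' P (w k)).Nonempty ∧
        (f ^ a) x ∈ closure (⋂ k : Fin n, ⇑(f ^ (k : ℤ)) ⁻¹' P (w k))} := by
      rintro w ⟨A, hA, rfl⟩
      exact hkey A (ht hA) a n (by omega)
    calc t.card = (↑t : Set ↥Sig).ncard := (Set.ncard_coe_finset t).symm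
      _ = (Φ '' ↑t).ncard := (Set.ncard_image_of_injOn hinj).symm
      _ ≤ _ := Set.ncard_le_ncard himg (Set.toFinite _)
      _ ≤ 4 := hmult n (by omega) ((f ^ a) x)
  have hfin : (p ⁻¹' {x}).Finite := by
    by_contra hinf
    obtain ⟨t, hts, hcard⟩ :=
      Set.Infinite.exists_subset_card_eq hinf 5
    have := L t hts
    omega
  refine ⟨hfin, ?_⟩
  rw [Set.ncard_eq_toFinset_card _ hfin]
  exact L hfin.toFinset (by rw [Set.Finite.coe_toFinset])
end

section
/- Let T : X → X and S : Y → Y be measurable maps on standard Borel spaces, p : X → Y measurable with p ∘ T = S ∘ p. Let μ be a T-invariant probability measure on X such that p_*μ is ergodic for S and μ is the unique T-invariant measure projecting to p_*μ. Then μ is ergodic for T. -/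
open MeasureTheory
open Set ENNReal

lemma cover_lt {Z : Type*} [MeasurableSpace Z] (c : ℝ≥0∞) (f : Z → ℝ≥0∞) :
    {y | c < f y} ⊆ ⋃ n : ℕ, {y | c + ((n : ℝ≥0∞) + 1)⁻¹ < f y} := by
  intro y hy
  rcases ENNReal.lt_iff_exists_add_pos_lt.mp (hy : c < f y) with ⟨ε, hε, hlt⟩
  rcases ENNReal.exists_inv_nat_lt (by exact_mod_cast hε.ne' : (ε : ℝ≥0∞) ≠ 0) with ⟨n, hn⟩
  refine Set.mem_iUnion.mpr ⟨n, ?_⟩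
  show c + ((n : ℝ≥0∞) + 1)⁻¹ < f y
  have h1 : ((n : ℝ≥0∞) + 1)⁻¹ ≤ ((n : ℝ≥0∞))⁻¹ := by gcongr; exact le_self_add
  calc c + ((n : ℝ≥0∞) + 1)⁻¹ ≤ c + (n : ℝ≥0∞)⁻¹ := by gcongr
    _ ≤ c + ε := add_le_add_right hn.le c
    _ < f y := hlt

lemma key_erg {Z : Type*} [MeasurableSpace Z] (S : Z → Z) (m ν : Measure Z)
    [IsProbabilityMeasure m] [IsProbabilityMeasure ν]
    (herg : Ergodic S m) (hν : MeasurePreserving S ν ν) (hac : ν ≪ m) : ν = m := by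
  set f : Z → ℝ≥0∞ := ν.rnDeriv m with hfdef
  have hf : Measurable f := Measure.measurable_rnDeriv _ _
  have hwd : m.withDensity f = ν := Measure.withDensity_rnDeriv_eq ν m hac
  have hint : ∫⁻ y, f y ∂m = 1 := by
    have := congrArg (fun μ' : Measure Z => μ' univ) hwd
    simpa [withDensity_apply f MeasurableSet.univ] using this
  -- step: for finite c > 1, m {f > c} = 0
  have hstep : ∀ c : ℝ≥0∞, 1 < c → c ≠ ⊤ → m {y | c < f y} = 0 := by
    intro c hc1 hctop
    set A : Set Z := {y | c < f y} with hAdef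
    have hA : MeasurableSet A := measurableSet_lt measurable_const hf
    set B : Set Z := S ⁻¹' A with hBdef
    have hB : MeasurableSet B := herg.measurable hA
    have hmBA : m B = m A := herg.measure_preimage hA.nullMeasurableSet
    have hνBA : ν B = ν A := hν.measure_preimage hA.nullMeasurableSet
    have hm1 : m (A ∩ B) + m (A \ B) = m A := measure_inter_add_diff A hB
    have hm2 : m (B ∩ A) + m (B \ A) = m B := measure_inter_add_diff B hA
    have hmdiff : m (A \ B) = m (B \ A) := by
      refine (ENNReal.add_right_inj (measure_lt_top m (A ∩ B)).ne).mp ?_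
      rw [hm1, Set.inter_comm B A] at *
      rw [hm2, hmBA]
    have hν1 : ν (A ∩ B) + ν (A \ B) = ν A := measure_inter_add_diff A hB
    have hν2 : ν (B ∩ A) + ν (B \ A) = ν B := measure_inter_add_diff B hA
    have hνdiff : ν (A \ B) = ν (B \ A) := by
      refine (ENNReal.add_right_inj (measure_lt_top ν (A ∩ B)).ne).mp ?_
      rw [hν1, Set.inter_comm B A] at *
      rw [hν2, hνBA]
    have hub : ν (B \ A) ≤ c * m (B \ A) := by
      rw [← hwd, withDensity_apply f (hB.diff hA)]
      calc ∫⁻ y in B \ A, f y ∂m ≤ ∫⁻ _ in B \ A, c ∂m :=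
            setLIntegral_mono measurable_const fun y hy => le_of_not_gt hy.2
        _ = c * m (B \ A) := setLIntegral_const _ _
    have hAB0 : m (A \ B) = 0 := by
      by_contra h0
      have hcover : (A \ B) ⊆ ⋃ n : ℕ, (A \ B) ∩ {y | c + ((n : ℝ≥0∞) + 1)⁻¹ ≤ f y} := by
        intro y hy
        rcases Set.mem_iUnion.mp (cover_lt c f hy.1) with ⟨n, hn⟩
        refine Set.mem_iUnion.mpr ⟨n, hy, ?_⟩
        show c + ((n : ℝ≥0∞) + 1)⁻¹ ≤ f y
        exact le_of_lt hn
      have hex : ∃ n : ℕ, m ((A \ B) ∩ {y | c + ((n : ℝ≥0∞) + 1)⁻¹ ≤ f y}) ≠ 0 := by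
        by_contra hall
        push_neg at hall
        exact h0 (measure_mono_null hcover (measure_iUnion_null hall))
      rcases hex with ⟨n, hn⟩
      set δ : ℝ≥0∞ := ((n : ℝ≥0∞) + 1)⁻¹ with hδ
      set t : Set Z := (A \ B) ∩ {y | c + δ ≤ f y} with ht
      have htsub : t ⊆ A \ B := Set.inter_subset_left
      have htm : MeasurableSet t := (hA.diff hB).inter (measurableSet_le measurable_const hf)
      have hteq : (A \ B) ∩ t = t := Set.inter_eq_self_of_subset_right htsub
      have hlb : c * m (A \ B) + δ * m t ≤ ν (A \ B) := by
        rw [← hwd, withDensity_apply f (hA.diff hB)]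
        have hsplit : ∫⁻ y in (A \ B) ∩ t, f y ∂m + ∫⁻ y in (A \ B) \ t, f y ∂m
            = ∫⁻ y in A \ B, f y ∂m := lintegral_inter_add_diff _ _ htm
        have h1 : (c + δ) * m t ≤ ∫⁻ y in (A \ B) ∩ t, f y ∂m := by
          rw [hteq]
          calc (c + δ) * m t = ∫⁻ _ in t, (c + δ) ∂m := (setLIntegral_const _ _).symm
            _ ≤ ∫⁻ y in t, f y ∂m := setLIntegral_mono hf fun y hy => hy.2
        have h2 : c * m ((A \ B) \ t) ≤ ∫⁻ y in (A \ B) \ t, f y ∂m := by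
          calc c * m ((A \ B) \ t) = ∫⁻ _ in (A \ B) \ t, c ∂m := (setLIntegral_const _ _).symm
            _ ≤ _ := setLIntegral_mono hf fun y hy => (hy.1.1 : c < f y).le
        have hmeq : m t + m ((A \ B) \ t) = m (A \ B) := by
          have h := measure_inter_add_diff (μ := m) (A \ B) htm
          rwa [hteq] at h
        calc c * m (A \ B) + δ * m t
            = c * (m t + m ((A \ B) \ t)) + δ * m t := by rw [hmeq]
          _ = (c + δ) * m t + c * m ((A \ B) \ t) := by ring
          _ ≤ ∫⁻ y in (A \ B) ∩ t, f y ∂m + ∫⁻ y in (A \ B) \ t, f y ∂m := add_le_add h1 h2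
          _ = ∫⁻ y in A \ B, f y ∂m := hsplit
      have hchain : c * m (A \ B) + δ * m t ≤ c * m (A \ B) + 0 := by
        rw [add_zero]
        calc c * m (A \ B) + δ * m t ≤ ν (A \ B) := hlb
          _ = ν (B \ A) := hνdiff
          _ ≤ c * m (B \ A) := hub
          _ = c * m (A \ B) := by rw [hmdiff]
      have hfin' : c * m (A \ B) ≠ ⊤ := ENNReal.mul_ne_top hctop (measure_lt_top m _).ne
      have hzero : δ * m t = 0 := le_antisymm
        ((ENNReal.add_le_add_iff_left hfin').mp hchain) (zero_le)
      have hδ0 : δ ≠ 0 := by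
        simp [hδ]
      exact hn (by simpa [hδ0] using hzero)
    have hBA0 : m (B \ A) = 0 := hmdiff ▸ hAB0
    have hae : S ⁻¹' A =ᵐ[m] A := by
      rw [Filter.eventuallyEq_set]
      filter_upwards [measure_eq_zero_iff_ae_notMem.mp hAB0, measure_eq_zero_iff_ae_notMem.mp hBA0]
        with y hy1 hy2
      constructor
      · intro hyB; by_contra hyA; exact hy2 ⟨hyB, hyA⟩
      · intro hyA; by_contra hyB; exact hy1 ⟨hyA, hyB⟩
    rcases herg.quasiErgodic.ae_empty_or_univ₀ hA.nullMeasurableSet hae with h | h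
    · simpa using measure_congr h
    · exfalso
      have hmA : m A = 1 := by simpa using measure_congr h
      have hge : c * m A ≤ ∫⁻ y, f y ∂m := by
        calc c * m A = ∫⁻ _ in A, c ∂m := (setLIntegral_const _ _).symm
          _ ≤ ∫⁻ y in A, f y ∂m := setLIntegral_mono hf fun y hy => (hy : c < f y).le
          _ ≤ ∫⁻ y, f y ∂m := setLIntegral_le_lintegral _ _
      rw [hmA, mul_one, hint] at hge
      exact absurd hge (not_le.mpr hc1)
  have hle : f ≤ᵐ[m] 1 := by
    have hnull : m {y | 1 < f y} = 0 := by
      refine measure_mono_null (cover_lt 1 f) (measure_iUnion_null fun n => ?_)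
      refine hstep _ ?_ ?_
      · exact ENNReal.lt_add_right one_ne_top (by simp)
      · exact ENNReal.add_ne_top.mpr ⟨one_ne_top, by simp⟩
    filter_upwards [measure_eq_zero_iff_ae_notMem.mp hnull] with y hy
    exact le_of_not_gt hy
  have hfeq : f =ᵐ[m] 1 := by
    refine ae_eq_of_ae_le_of_lintegral_le hle (by rw [hint]; exact one_ne_top)
      aemeasurable_const ?_
    simp [hint]
  calc ν = m.withDensity f := hwd.symm
    _ = m.withDensity 1 := withDensity_congr_ae hfeq
    _ = m := withDensity_one

/-- if `p ∘ T = S ∘ p`, `μ` is `T`-invariant, `p₊μ` is `S`-ergodic and `μ` is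
the unique `T`-invariant probability measure projecting to `p₊μ`, then `μ` is `T`-ergodic. -/
theorem stmt_4 {X Y : Type*} [MeasurableSpace X] [StandardBorelSpace X]
    [MeasurableSpace Y] [StandardBorelSpace Y]
    (T : X → X) (S : Y → Y) (hT : Measurable T) (hS : Measurable S)
    (p : X → Y) (hp : Measurable p) (hcomm : p ∘ T = S ∘ p)
    (μ : Measure X) [IsProbabilityMeasure μ]
    (hinv : MeasurePreserving T μ μ)
    (herg : Ergodic S (μ.map p))
    (huniq : ∀ μ' : Measure X, IsProbabilityMeasure μ' → MeasurePreserving T μ' μ' →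
      μ'.map p = μ.map p → μ' = μ) :
    Ergodic T μ := by
  refine ⟨hinv, ⟨fun s hs hsT => ?_⟩⟩
  by_contra hcon
  rw [Filter.eventuallyConst_set, not_or] at hcon
  obtain ⟨h1, h2⟩ := hcon
  have hs0 : μ s ≠ 0 := fun h => h2 (measure_eq_zero_iff_ae_notMem.mp h)
  have hs1 : μ s ≠ 1 := by
    intro h
    have hc : μ sᶜ = 0 := (prob_compl_eq_zero_iff hs).mpr h
    refine h1 ?_
    filter_upwards [measure_eq_zero_iff_ae_notMem.mp hc] with x hx
    simpa using hx
  set a : ℝ≥0∞ := μ s with ha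
  have hatop : a ≠ ⊤ := (measure_lt_top μ s).ne
  set μ₁ : Measure X := a⁻¹ • μ.restrict s with hμ₁
  have hμ₁s : μ₁ s = 1 := by
    rw [hμ₁, Measure.smul_apply, smul_eq_mul, Measure.restrict_apply hs, Set.inter_self]
    exact ENNReal.inv_mul_cancel hs0 hatop
  have hμ₁prob : IsProbabilityMeasure μ₁ := by
    constructor
    rw [hμ₁, Measure.smul_apply, smul_eq_mul, Measure.restrict_apply MeasurableSet.univ,
      Set.univ_inter]
    exact ENNReal.inv_mul_cancel hs0 hatop
  have hres : (μ.restrict s).map T = μ.restrict s := by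
    refine Measure.ext fun B hB => ?_
    rw [Measure.map_apply hT hB, Measure.restrict_apply hB, Measure.restrict_apply (hT hB)]
    conv_lhs => rw [← hsT]
    rw [← Set.preimage_inter]
    exact hinv.measure_preimage (hB.inter hs).nullMeasurableSet
  have hmp₁ : MeasurePreserving T μ₁ μ₁ := by
    refine ⟨hT, ?_⟩
    rw [hμ₁, Measure.map_smul, hres]
  have hmapS : (μ₁.map p).map S = μ₁.map p := by
    rw [Measure.map_map hS hp, ← hcomm, ← Measure.map_map hp hT, hmp₁.map_eq]
  have hacμ : μ₁ ≪ μ := by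
    intro B hB0
    rw [hμ₁, Measure.smul_apply, smul_eq_mul]
    have : μ.restrict s B = 0 :=
      le_antisymm ((Measure.restrict_le_self B).trans_eq hB0) (zero_le)
    rw [this, mul_zero]
  have hac : μ₁.map p ≪ μ.map p := hacμ.map hp
  have : IsProbabilityMeasure (μ.map p) := Measure.isProbabilityMeasure_map hp.aemeasurable
  have : IsProbabilityMeasure (μ₁.map p) := Measure.isProbabilityMeasure_map hp.aemeasurable
  have hkey : μ₁.map p = μ.map p := key_erg S (μ.map p) (μ₁.map p) herg ⟨hS, hmapS⟩ hac
  have heq : μ₁ = μ := huniq μ₁ hμ₁prob hmp₁ hkey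
  rw [heq] at hμ₁s
  exact hs1 hμ₁s
end

section
/- Let f : M → M be a continuous map of a compact metric space with topological entropy h_top(f), and let μ be an ergodic invariant probability measure with Kolmogorov–Sinai entropy h(f,μ). Fix a finite partition Q with h(f,μ) = h(f,μ,Q). Suppose there exist constants c, C > 0, a measurable set M₁, and an integer T ≥ 1 such that, conditioned on the σ-algebra W = ⋁_{n≥1} fⁿQ, at most C elements of Q^T have positive conditional measure at points of M₁, while for points outside M₁ the number of such elements is at most e^{(h_top(f)+α)T}. Then h(f,μ) ≤ μ(M₁)·(log C)/T + (1−μ(M₁))·(h_top(f)+α). In particular, if μ(M₁) ≥ m₁ then h(f,μ) ≤ h_top(f) − m₁·h_top(f) + α + (log C)/T. -/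
open MeasureTheory Dynamics

variable {X : Type*} [MeasurableSpace X]

/-- The length-`N` cylinder of the partition coded by `s : X → ι`. -/
def cylinder (T : X → X) {ι : Type*} (s : X → ι) (N : ℕ) (w : Fin N → ι) : Set X :=
  {x | ∀ k : Fin N, s (T^[(k : ℕ)] x) = w k}

/-- Entropy of `T` relative to the finite partition coded by `s`:
`h(T,μ,Q) = inf_n (1/n) H_μ(Qⁿ)` (which equals the limit, by subadditivity). -/
noncomputable def relEntropy (T : X → X) (μ : Measure X) {ι : Type*} [Fintype ι]
    (s : X → ι) : ℝ :=
  ⨅ n : ℕ, ((n : ℝ) + 1)⁻¹ *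
    ∑ w : Fin (n + 1) → ι, Real.negMulLog (μ (cylinder T s (n + 1) w)).toReal

set_option linter.unusedSectionVars false
set_option linter.unusedVariables false
set_option maxHeartbeats 1000000

open Filter Real
open scoped Topology

namespace Stmt15Aux

variable {X : Type*} [MeasurableSpace X]

/-- entropy of the partition given by fibers of `t` -/
noncomputable def partEnt {κ : Type*} [Fintype κ] (μ : Measure X) (t : X → κ) : ℝ :=
  ∑ b : κ, Real.negMulLog (μ (t ⁻¹' {b})).toReal

lemma partEnt_comp_inj {κ κ' : Type*} [Fintype κ] [Fintype κ'] (μ : Measure X)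
    (t : X → κ) (e : κ → κ') (he : Function.Injective e) :
    partEnt μ (fun x => e (t x)) = partEnt μ t := by
  classical
  unfold partEnt
  have himg : ∑ b' ∈ Finset.univ.image e, Real.negMulLog (μ ((fun x => e (t x)) ⁻¹' {b'})).toReal
      = ∑ b : κ, Real.negMulLog (μ ((fun x => e (t x)) ⁻¹' {e b})).toReal :=
    Finset.sum_image (fun a _ b _ h => he h)
  rw [← Finset.sum_subset (Finset.subset_univ (Finset.univ.image e)) ?junk, himg]
  · apply Finset.sum_congr rfl
    intro b _
    have hpre : (fun x => e (t x)) ⁻¹' {e b} = t ⁻¹' {b} := by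
      ext x; simp [he.eq_iff]
    rw [hpre]
  case junk =>
    intro b' _ hb'
    have : (fun x => e (t x)) ⁻¹' {b'} = ∅ := by
      ext x
      simp only [Set.mem_preimage, Set.mem_singleton_iff, Set.mem_empty_iff_false, iff_false]
      intro h
      exact hb' (Finset.mem_image.2 ⟨t x, Finset.mem_univ _, h⟩)
    simp [this]

lemma partEnt_comp_measurePreserving {κ : Type*} [Fintype κ] {μ : Measure X}
    {g : X → X} (hg : MeasurePreserving g μ μ) (t : X → κ)
    (ht : ∀ b : κ, MeasurableSet (t ⁻¹' {b})) :
    partEnt μ (fun x => t (g x)) = partEnt μ t := by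
  unfold partEnt
  refine Finset.sum_congr rfl fun b _ => ?_
  have : (fun x => t (g x)) ⁻¹' {b} = g ⁻¹' (t ⁻¹' {b}) := rfl
  rw [this, hg.measure_preimage (ht b).nullMeasurableSet]

lemma partEnt_nonneg {κ : Type*} [Fintype κ] (μ : Measure X) [IsProbabilityMeasure μ]
    (t : X → κ) : 0 ≤ partEnt μ t := by
  refine Finset.sum_nonneg fun b _ => Real.negMulLog_nonneg ENNReal.toReal_nonneg ?_
  exact ENNReal.toReal_le_of_le_ofReal one_pos.le (by simpa using prob_le_one)

/-- Gibbs: entropy of a finite probability vector is at most log of the support size. -/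
lemma sum_negMulLog_le_log_ncard {κ : Type*} [Fintype κ] (p : κ → ℝ)
    (h0 : ∀ b, 0 ≤ p b) (h1 : ∑ b, p b = 1) :
    ∑ b, Real.negMulLog (p b) ≤ Real.log (Set.ncard {b | 0 < p b}) := by
  classical
  set t : Finset κ := Finset.univ.filter (fun b => 0 < p b) with ht
  have hsum : ∑ b ∈ t, p b = 1 := by
    rw [← h1]
    refine Finset.sum_subset (Finset.filter_subset _ _) ?_
    intro b _ hb
    have := h0 b
    have hz : p b = 0 := by
      by_contra h
      exact hb (Finset.mem_filter.2 ⟨Finset.mem_univ _, lt_of_le_of_ne (h0 b) (Ne.symm h)⟩)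
    simp [hz]
  have hset : {b | 0 < p b} = (t : Set κ) := by
    ext b; simp [ht]
  rw [hset, Set.ncard_coe_finset]
  have hres : ∑ b : κ, Real.negMulLog (p b) = ∑ b ∈ t, Real.negMulLog (p b) := by
    refine (Finset.sum_subset (Finset.filter_subset _ _) ?_).symm
    intro b _ hb
    have hpb : p b = 0 := by
      by_contra h
      exact hb (Finset.mem_filter.2 ⟨Finset.mem_univ _, lt_of_le_of_ne (h0 b) (Ne.symm h)⟩)
    simp [hpb]
  rw [hres]
  have hconc : ConcaveOn ℝ (Set.Ioi (0:ℝ)) Real.log := strictConcaveOn_log_Ioi.concaveOn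
  have hmem : ∀ b ∈ t, (p b)⁻¹ ∈ Set.Ioi (0:ℝ) := by
    intro b hb
    have := (Finset.mem_filter.1 hb).2
    exact Set.mem_Ioi.2 (inv_pos.2 this)
  have h0' : ∀ b ∈ t, 0 ≤ p b := fun b _ => h0 b
  have := hconc.le_map_sum h0' hsum hmem
  calc ∑ b ∈ t, Real.negMulLog (p b) = ∑ b ∈ t, p b • Real.log (p b)⁻¹ := by
        refine Finset.sum_congr rfl fun b hb => ?_
        have hpb := (Finset.mem_filter.1 hb).2
        simp only [Real.negMulLog, Real.log_inv, smul_eq_mul]; ring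
    _ ≤ Real.log (∑ b ∈ t, p b • (p b)⁻¹) := this
    _ = Real.log (t.card) := by
        congr 1
        rw [show ∑ b ∈ t, p b • (p b)⁻¹ = ∑ _b ∈ t, (1:ℝ) from Finset.sum_congr rfl
          (fun b hb => by
            have hpb := (Finset.mem_filter.1 hb).2
            simp [smul_eq_mul, mul_inv_cancel₀ (ne_of_gt hpb)])]
        simp

lemma abs_negMulLog_le_one {y : ℝ} (h0 : 0 ≤ y) (h1 : y ≤ 1) : |Real.negMulLog y| ≤ 1 := by
  rcases eq_or_lt_of_le h0 with h | h
  · simp [← h]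
  · rw [abs_of_nonneg (Real.negMulLog_nonneg h0 h1)]
    have hlog : Real.log y⁻¹ ≤ y⁻¹ - 1 := Real.log_le_sub_one_of_pos (inv_pos.2 h)
    have : Real.negMulLog y = y * Real.log y⁻¹ := by
      simp only [Real.negMulLog, Real.log_inv]; ring
    rw [this]
    calc y * Real.log y⁻¹ ≤ y * (y⁻¹ - 1) := by
          exact mul_le_mul_of_nonneg_left hlog h0
      _ = 1 - y := by field_simp
      _ ≤ 1 := by linarith

end Stmt15Aux

namespace Stmt15Aux

variable {X : Type*} [MeasurableSpace X]

variable {κ : Type*} [Fintype κ] {t : X → κ}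

lemma comap_le_of_preimage (ht : ∀ S : Set κ, MeasurableSet (t ⁻¹' S)) :
    MeasurableSpace.comap t ⊤ ≤ ‹MeasurableSpace X› := by
  rintro S ⟨S', -, rfl⟩
  exact ht S'

lemma sum_indicator_fiber (t : X → κ) (ψ : κ → ℝ) (x : X) :
    ∑ b : κ, (t ⁻¹' {b}).indicator (fun _ => ψ b) x = ψ (t x) := by
  classical
  rw [Finset.sum_eq_single (t x)]
  · simp [Set.indicator_of_mem, Set.mem_preimage]
  · intro b _ hb
    rw [Set.indicator_of_notMem]
    simp [Set.mem_preimage, Ne.symm hb]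
  · simp

lemma integrable_comp_fintype (ν : Measure X) [IsFiniteMeasure ν]
    (ht : ∀ S : Set κ, MeasurableSet (t ⁻¹' S)) (ψ : κ → ℝ) :
    Integrable (fun x => ψ (t x)) ν := by
  have hrep : (fun x => ψ (t x)) = fun x => ∑ b : κ, (t ⁻¹' {b}).indicator (fun _ => ψ b) x :=
    funext fun x => (sum_indicator_fiber t ψ x).symm
  rw [hrep]
  exact integrable_finset_sum _ fun b _ => (integrable_const (ψ b)).indicator (ht {b})

lemma integral_comp_fintype (ν : Measure X) [IsFiniteMeasure ν]
    (ht : ∀ S : Set κ, MeasurableSet (t ⁻¹' S)) (ψ : κ → ℝ) :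
    ∫ x, ψ (t x) ∂ν = ∑ b : κ, ψ b * (ν (t ⁻¹' {b})).toReal := by
  have hrep : (fun x => ψ (t x)) = fun x => ∑ b : κ, (t ⁻¹' {b}).indicator (fun _ => ψ b) x :=
    funext fun x => (sum_indicator_fiber t ψ x).symm
  rw [hrep, integral_finset_sum _ fun b _ => (integrable_const (ψ b)).indicator (ht {b})]
  refine Finset.sum_congr rfl fun b _ => ?_
  rw [integral_indicator_const _ (ht {b})]
  simp [mul_comm]; exact Or.inl rfl

lemma measure_inter_preimage_sum (μ : Measure X) (ht : ∀ S : Set κ, MeasurableSet (t ⁻¹' S))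
    {A : Set X} (hA : MeasurableSet A) (S' : Set κ) :
    μ (A ∩ t ⁻¹' S') = ∑ b ∈ (Set.toFinite S').toFinset, μ (A ∩ t ⁻¹' {b}) := by
  classical
  have hdec : A ∩ t ⁻¹' S' = ⋃ b ∈ (Set.toFinite S').toFinset, A ∩ t ⁻¹' {b} := by
    ext x
    simp only [Set.mem_inter_iff, Set.mem_preimage, Set.mem_iUnion, Set.Finite.mem_toFinset,
      Set.mem_singleton_iff, exists_prop]
    constructor
    · rintro ⟨hxA, hxS⟩; exact ⟨t x, hxS, hxA, rfl⟩
    · rintro ⟨b, hbS, hxA, rfl⟩; exact ⟨hxA, hbS⟩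
  rw [hdec, measure_biUnion_finset ?hdisj fun b _ => hA.inter (ht {b})]
  case hdisj =>
    intro b _ b' _ hbb'
    refine Set.disjoint_left.2 fun x hx hx' => hbb' ?_
    rw [← hx.2, ← hx'.2]

/-- Conditional expectation with respect to the σ-algebra generated by a finite partition. -/
lemma condexp_comap_fintype (μ : Measure X) [IsProbabilityMeasure μ]
    (ht : ∀ S : Set κ, MeasurableSet (t ⁻¹' S)) {A : Set X} (hA : MeasurableSet A) :
    μ[A.indicator (1 : X → ℝ) | MeasurableSpace.comap t ⊤] =ᵐ[μ]
      fun x => (μ (A ∩ t ⁻¹' {t x})).toReal / (μ (t ⁻¹' {t x})).toReal := by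
  classical
  have hm : MeasurableSpace.comap t ⊤ ≤ ‹MeasurableSpace X› := comap_le_of_preimage ht
  set r : κ → ℝ := fun b => (μ (A ∩ t ⁻¹' {b})).toReal / (μ (t ⁻¹' {b})).toReal with hr
  have key : (fun x => r (t x)) =ᵐ[μ] μ[A.indicator (1 : X → ℝ) | MeasurableSpace.comap t ⊤] := by
    refine ae_eq_condExp_of_forall_setIntegral_eq hm
      ((integrable_const (1:ℝ)).indicator hA) ?_ ?_ ?_
    · intro S _ _
      exact (integrable_comp_fintype μ ht r).integrableOn
    · rintro S ⟨S', -, rfl⟩ -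
      have hfin : IsFiniteMeasure (μ.restrict (t ⁻¹' S')) := inferInstance
      rw [integral_comp_fintype (μ.restrict (t ⁻¹' S')) ht r]
      -- RHS: ∫ indicator over the set
      have hRHS : ∫ x in t ⁻¹' S', A.indicator (1 : X → ℝ) x ∂μ
          = (μ (A ∩ t ⁻¹' S')).toReal := by
        rw [show A.indicator (1 : X → ℝ) = A.indicator (fun _ => (1:ℝ)) from rfl,
          integral_indicator_const _ hA, measureReal_def, Measure.restrict_apply hA]
        simp
      rw [hRHS, measure_inter_preimage_sum μ ht hA S', ENNReal.toReal_sum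
        (fun b _ => measure_ne_top μ _)]
      -- LHS sum
      have hfib : ∀ b : κ, μ.restrict (t ⁻¹' S') (t ⁻¹' {b})
          = if b ∈ (Set.toFinite S').toFinset then μ (t ⁻¹' {b}) else 0 := by
        intro b
        rw [Measure.restrict_apply (ht {b})]
        by_cases hb : b ∈ (Set.toFinite S').toFinset
        · rw [if_pos hb]
          congr 1
          have hbS : b ∈ S' := (Set.Finite.mem_toFinset _).1 hb
          ext x
          simp only [Set.mem_inter_iff, Set.mem_preimage, Set.mem_singleton_iff]
          exact ⟨fun h => h.1, fun h => ⟨h, by rw [h]; exact hbS⟩⟩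
        · rw [if_neg hb]
          have hbS : b ∉ S' := fun h => hb ((Set.Finite.mem_toFinset _).2 h)
          have : t ⁻¹' {b} ∩ t ⁻¹' S' = ∅ := by
            ext x
            simp only [Set.mem_inter_iff, Set.mem_preimage, Set.mem_singleton_iff,
              Set.mem_empty_iff_false, iff_false, not_and]
            rintro rfl
            exact hbS
          simp [this]
      have : ∑ b : κ, r b * (μ.restrict (t ⁻¹' S') (t ⁻¹' {b})).toReal
          = ∑ b ∈ (Set.toFinite S').toFinset, r b * (μ (t ⁻¹' {b})).toReal := by
        rw [← Finset.sum_filter_of_ne (p := fun b => b ∈ (Set.toFinite S').toFinset)]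
        · refine Finset.sum_congr ?_ fun b hb => ?_
          · ext b; simp
          · rw [hfib b, if_pos (by simpa using hb)]
        · intro b _ hne
          by_contra hb
          apply hne
          rw [hfib b, if_neg hb]
          simp
      rw [this]
      refine Finset.sum_congr rfl fun b _ => ?_
      rw [hr]
      by_cases hb0 : μ (t ⁻¹' {b}) = 0
      · have hA0 : μ (A ∩ t ⁻¹' {b}) = 0 :=
          measure_mono_null Set.inter_subset_right hb0
        simp [hb0, hA0]
      · field_simp [ENNReal.toReal_ne_zero, hb0, measure_ne_top μ _]
    · refine StronglyMeasurable.aestronglyMeasurable ?_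
      refine Measurable.stronglyMeasurable ?_
      exact (measurable_from_top (f := r)).comp
        (Measurable.of_comap_le le_rfl)
  exact key.symm

end Stmt15Aux

namespace Stmt15Aux


variable {X : Type*} [MeasurableSpace X]

lemma negMulLog_div_aux {q p : ℝ} (hq : q ≠ 0) :
    q * Real.negMulLog (p / q) = Real.negMulLog p + p * Real.log q := by
  by_cases hp : p = 0
  · simp [hp]
  · have : Real.log (p / q) = Real.log p - Real.log q := Real.log_div hp hq
    simp only [Real.negMulLog, this]
    field_simp
    ring

lemma negMulLog_cond_sum {A : Type*} [Fintype A] (p : A → ℝ) (q : ℝ)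
    (hq : q = ∑ a, p a) (h0 : ∀ a, 0 ≤ p a) :
    q * ∑ a, Real.negMulLog (p a / q) = (∑ a, Real.negMulLog (p a)) - Real.negMulLog q := by
  by_cases hq0 : q = 0
  · have hall : ∀ a, p a = 0 := by
      intro a
      have h1 : ∑ a, p a = 0 := by rw [← hq, hq0]
      exact (Finset.sum_eq_zero_iff_of_nonneg (fun a _ => h0 a)).1 h1 a (Finset.mem_univ a)
    simp [hq0, hall]
  · rw [Finset.mul_sum]
    have : ∀ a ∈ Finset.univ, q * Real.negMulLog (p a / q)
        = Real.negMulLog (p a) + p a * Real.log q := fun a _ => negMulLog_div_aux hq0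
    rw [Finset.sum_congr rfl this, Finset.sum_add_distrib, ← Finset.sum_mul, ← hq]
    have : Real.negMulLog q = -(q * Real.log q) := by simp [Real.negMulLog]
    rw [this]
    ring

end Stmt15Aux

namespace Stmt15Aux

variable {X : Type*} [MeasurableSpace X]

/-- conditional entropy of the partition of `u` given the partition of `v` -/
noncomputable def condEnt {A B : Type*} [Fintype A] [Fintype B] (μ : Measure X)
    (u : X → A) (v : X → B) : ℝ :=
  partEnt μ (fun x => (u x, v x)) - partEnt μ v

lemma partEnt_pair_eq {A B : Type*} [Fintype A] [Fintype B] (μ : Measure X)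
    (u : X → A) (v : X → B) :
    partEnt μ (fun x => (u x, v x)) =
      ∑ b : B, ∑ a : A, Real.negMulLog (μ (u ⁻¹' {a} ∩ v ⁻¹' {b})).toReal := by
  unfold partEnt
  rw [Fintype.sum_prod_type_right]
  refine Finset.sum_congr rfl fun b _ => Finset.sum_congr rfl fun a _ => ?_
  have hpre : (fun x => (u x, v x)) ⁻¹' {(a, b)} = u ⁻¹' {a} ∩ v ⁻¹' {b} := by
    ext x; simp [Prod.ext_iff]
  rw [hpre]

lemma measure_fiber_sum {A B : Type*} [Fintype A] [Fintype B] (μ : Measure X)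
    [IsFiniteMeasure μ] {u : X → A} {v : X → B}
    (hu : ∀ S : Set A, MeasurableSet (u ⁻¹' S)) (hv : ∀ S : Set B, MeasurableSet (v ⁻¹' S))
    (b : B) :
    (μ (v ⁻¹' {b})).toReal = ∑ a : A, (μ (u ⁻¹' {a} ∩ v ⁻¹' {b})).toReal := by
  classical
  have h := measure_inter_preimage_sum μ hu (hv {b}) (Set.univ : Set A)
  simp only [Set.preimage_univ, Set.inter_univ] at h
  rw [h, ENNReal.toReal_sum (fun a _ => measure_ne_top μ _)]
  refine Finset.sum_congr ?_ fun a _ => by rw [Set.inter_comm]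
  ext a; simp

/-- The conditional entropy equals the integral of the pointwise entropy of conditional
expectations of the indicators. -/
lemma integral_condEnt {A B : Type*} [Fintype A] [Fintype B] (μ : Measure X)
    [IsProbabilityMeasure μ] {u : X → A} {v : X → B}
    (hu : ∀ S : Set A, MeasurableSet (u ⁻¹' S)) (hv : ∀ S : Set B, MeasurableSet (v ⁻¹' S)) :
    ∫ x, ∑ a : A, Real.negMulLog
        ((μ[(u ⁻¹' {a}).indicator (1 : X → ℝ) | MeasurableSpace.comap v ⊤]) x) ∂μ
      = condEnt μ u v := by
  classical
  set r : A → B → ℝ := fun a b =>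
    (μ (u ⁻¹' {a} ∩ v ⁻¹' {b})).toReal / (μ (v ⁻¹' {b})).toReal with hr
  have hae : ∀ᵐ x ∂μ, ∀ a : A,
      (μ[(u ⁻¹' {a}).indicator (1 : X → ℝ) | MeasurableSpace.comap v ⊤]) x = r a (v x) := by
    rw [ae_all_iff]
    intro a
    exact condexp_comap_fintype μ hv (hu {a})
  have hcongr : ∫ x, ∑ a : A, Real.negMulLog
        ((μ[(u ⁻¹' {a}).indicator (1 : X → ℝ) | MeasurableSpace.comap v ⊤]) x) ∂μ
      = ∫ x, (fun b => ∑ a : A, Real.negMulLog (r a b)) (v x) ∂μ := by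
    refine integral_congr_ae ?_
    filter_upwards [hae] with x hx
    exact Finset.sum_congr rfl fun a _ => by rw [hx a]
  rw [hcongr, integral_comp_fintype μ hv (fun b => ∑ a : A, Real.negMulLog (r a b))]
  have hper : ∀ b : B, (∑ a : A, Real.negMulLog (r a b)) * (μ (v ⁻¹' {b})).toReal
      = (∑ a : A, Real.negMulLog (μ (u ⁻¹' {a} ∩ v ⁻¹' {b})).toReal)
        - Real.negMulLog (μ (v ⁻¹' {b})).toReal := by
    intro b
    rw [mul_comm]
    exact negMulLog_cond_sum (fun a => (μ (u ⁻¹' {a} ∩ v ⁻¹' {b})).toReal)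
      ((μ (v ⁻¹' {b})).toReal) (measure_fiber_sum μ hu hv b)
      (fun a => ENNReal.toReal_nonneg)
  rw [Finset.sum_congr rfl fun b _ => hper b, Finset.sum_sub_distrib]
  unfold condEnt
  rw [partEnt_pair_eq μ u v]
  rfl

end Stmt15Aux

namespace Stmt15Aux

variable {X : Type*} [MeasurableSpace X]
variable {ι : Type*} [Fintype ι] [MeasurableSpace ι] [MeasurableSingletonClass ι]

section Dyn

variable (f : X ≃ X) (s : X → ι)

/-- future itinerary of length `m` -/
def fut (m : ℕ) : X → (Fin m → ι) := fun x i => s ((⇑f)^[(i : ℕ)] x)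

/-- past itinerary of length `m` -/
def pst (m : ℕ) : X → (Fin m → ι) := fun x i => s ((⇑f.symm)^[(i : ℕ) + 1] x)

variable {f s}

lemma cylinder_eq_fut_preimage (m : ℕ) (w : Fin m → ι) :
    _root_.cylinder (⇑f) s m w = fut f s m ⁻¹' {w} := by
  ext x
  simp only [_root_.cylinder, Set.mem_setOf_eq, Set.mem_preimage, Set.mem_singleton_iff, fut]
  exact ⟨fun h => funext h, fun h k => congrFun h k⟩

variable (hfm : Measurable (⇑f)) (hfm' : Measurable (⇑f.symm)) (hs : Measurable s)

include hfm hs in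
lemma fut_measurable (m : ℕ) : Measurable (fut f s m) :=
  measurable_pi_lambda _ fun i => hs.comp (hfm.iterate _)

include hfm hs in
lemma fut_preimage_measurable (m : ℕ) (S : Set (Fin m → ι)) :
    MeasurableSet (fut f s m ⁻¹' S) :=
  fut_measurable hfm hs m ((Set.toFinite S).measurableSet)

include hfm' hs in
lemma pst_measurable (m : ℕ) : Measurable (pst f s m) :=
  measurable_pi_lambda _ fun i => hs.comp (hfm'.iterate _)

include hfm' hs in
lemma pst_preimage_measurable (m : ℕ) (S : Set (Fin m → ι)) :
    MeasurableSet (pst f s m ⁻¹' S) :=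
  pst_measurable hfm' hs m ((Set.toFinite S).measurableSet)

lemma symm_iterate_iterate (n : ℕ) (x : X) : (⇑f.symm)^[n] ((⇑f)^[n] x) = x := by
  have : Function.LeftInverse (⇑f.symm) (⇑f) := f.symm_apply_apply
  exact this.iterate n x

/-- splitting map for itineraries -/
def splitCode (b T : ℕ) : (Fin (b + T) → ι) → (Fin T → ι) × (Fin b → ι) :=
  fun v => (fun i => v (Fin.natAdd b i), fun i => v (Fin.castAdd T (Fin.rev i)))

lemma splitCode_injective (b T : ℕ) : Function.Injective (splitCode (ι := ι) b T) := by
  intro v v' h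
  have h1 := congrArg Prod.fst h
  have h2 := congrArg Prod.snd h
  funext k
  rcases Nat.lt_or_ge (k : ℕ) b with hk | hk
  · have : k = Fin.castAdd T (Fin.rev ⟨b - 1 - (k : ℕ), by omega⟩) := by
      apply Fin.ext
      simp [Fin.rev]
      omega
    rw [this]
    exact congrFun h2 _
  · have : k = Fin.natAdd b ⟨(k : ℕ) - b, by omega⟩ := by
      apply Fin.ext
      simp
      omega
    rw [this]
    exact congrFun h1 _

lemma splitCode_fut (b T : ℕ) (x : X) :
    splitCode b T (fut f s (b + T) x)
      = (fut f s T ((⇑f)^[b] x), pst f s b ((⇑f)^[b] x)) := by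
  unfold splitCode fut pst
  refine Prod.ext ?_ ?_
  · funext i
    simp only [Fin.coe_natAdd]
    rw [← Function.iterate_add_apply, Nat.add_comm b (i : ℕ)]
  · funext i
    simp only [Fin.coe_castAdd, Fin.val_rev]
    have hib : (i : ℕ) + 1 ≤ b := i.isLt
    have hsplit : ((⇑f)^[b] x) = (⇑f)^[(i : ℕ) + 1] ((⇑f)^[b - ((i : ℕ) + 1)] x) := by
      rw [← Function.iterate_add_apply]
      congr 1
      omega
    rw [hsplit, symm_iterate_iterate]

/-- time-reversal recoding -/
def revCode (m : ℕ) : (Fin m → ι) → (Fin m → ι) := fun v i => v (Fin.rev i)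

lemma revCode_injective (m : ℕ) : Function.Injective (revCode (ι := ι) m) := by
  intro v v' h
  funext i
  have := congrFun h (Fin.rev i)
  simpa [revCode, Fin.rev_rev] using this

lemma revCode_fut (m : ℕ) (x : X) :
    revCode m (fut f s m x) = pst f s m ((⇑f)^[m] x) := by
  unfold revCode fut pst
  funext i
  simp only [Fin.val_rev]
  have hib : (i : ℕ) + 1 ≤ m := i.isLt
  have hsplit : ((⇑f)^[m] x) = (⇑f)^[(i : ℕ) + 1] ((⇑f)^[m - ((i : ℕ) + 1)] x) := by
    rw [← Function.iterate_add_apply]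
    congr 1
    omega
  rw [hsplit, symm_iterate_iterate]

end Dyn

end Stmt15Aux

namespace Stmt15Aux

variable {X : Type*} [MeasurableSpace X]
variable {ι : Type*} [Fintype ι] [MeasurableSpace ι] [MeasurableSingletonClass ι]

section Dyn2

variable {μ : MeasureTheory.Measure X} [MeasureTheory.IsProbabilityMeasure μ]
variable {f : X ≃ X} {s : X → ι}
variable (hfm : Measurable (⇑f)) (hfm' : Measurable (⇑f.symm)) (hs : Measurable s)
variable (hpres : MeasureTheory.MeasurePreserving (⇑f) μ μ)

include hfm hfm' hs hpres

lemma partEnt_step (b T : ℕ) :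
    partEnt μ (fut f s (b + T)) = partEnt μ (fun x => (fut f s T x, pst f s b x)) := by
  have h1 : partEnt μ (fun x => splitCode b T (fut f s (b + T) x)) = partEnt μ (fut f s (b + T)) :=
    partEnt_comp_inj μ _ _ (splitCode_injective b T)
  have hmeas : ∀ c : (Fin T → ι) × (Fin b → ι),
      MeasurableSet ((fun y => (fut f s T y, pst f s b y)) ⁻¹' {c}) := by
    intro c
    have hpre : (fun y => (fut f s T y, pst f s b y)) ⁻¹' {c}
        = fut f s T ⁻¹' {c.1} ∩ pst f s b ⁻¹' {c.2} := by
      ext x; simp [Prod.ext_iff]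
    rw [hpre]
    exact (fut_preimage_measurable hfm hs T _).inter (pst_preimage_measurable hfm' hs b _)
  calc partEnt μ (fut f s (b + T))
      = partEnt μ (fun x => splitCode b T (fut f s (b + T) x)) := h1.symm
    _ = partEnt μ (fun x => (fut f s T ((⇑f)^[b] x), pst f s b ((⇑f)^[b] x))) := by
        refine congrArg (fun t => partEnt μ t) (funext fun x => ?_)
        exact splitCode_fut b T x
    _ = partEnt μ (fun y => (fut f s T y, pst f s b y)) :=
        partEnt_comp_measurePreserving (hpres.iterate b)
          (fun y => (fut f s T y, pst f s b y)) hmeas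

lemma partEnt_pst_eq_fut (m : ℕ) : partEnt μ (pst f s m) = partEnt μ (fut f s m) := by
  have h1 : partEnt μ (fun x => revCode m (fut f s m x)) = partEnt μ (fut f s m) :=
    partEnt_comp_inj μ _ _ (revCode_injective m)
  have h2 : (fun x => revCode m (fut f s m x)) = fun x => pst f s m ((⇑f)^[m] x) := by
    funext x
    exact revCode_fut m x
  have h3 : partEnt μ (fun x => pst f s m ((⇑f)^[m] x)) = partEnt μ (pst f s m) :=
    partEnt_comp_measurePreserving (hpres.iterate m) _
      (fun c => pst_preimage_measurable hfm' hs m {c})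
  rw [← h3, ← h2, h1]

lemma partEnt_fut_congr {m m' : ℕ} (h : m = m') :
    partEnt μ (fut f s m) = partEnt μ (fut f s m') := by
  subst h; rfl

/-- chain rule expansion of the entropy of `Q^{T(j+1)}` -/
lemma chain_rule (T : ℕ) (j : ℕ) :
    partEnt μ (fut f s (T * (j + 1)))
      = partEnt μ (fut f s T)
        + ∑ i ∈ Finset.range j, condEnt μ (fut f s T) (pst f s (T * (i + 1))) := by
  induction j with
  | zero =>
      simp only [Finset.range_zero, Finset.sum_empty, add_zero]
      exact partEnt_fut_congr hfm hfm' hs hpres (by ring)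
  | succ j ih =>
      have hstep : partEnt μ (fut f s (T * (j + 2)))
          = partEnt μ (fun x => (fut f s T x, pst f s (T * (j + 1)) x)) := by
        rw [partEnt_fut_congr hfm hfm' hs hpres (show T * (j + 2) = T * (j + 1) + T by ring)]
        exact partEnt_step hfm hfm' hs hpres (T * (j + 1)) T
      rw [hstep]
      have : partEnt μ (fun x => (fut f s T x, pst f s (T * (j + 1)) x))
          = condEnt μ (fut f s T) (pst f s (T * (j + 1)))
            + partEnt μ (fut f s (T * (j + 1))) := by
        unfold condEnt
        rw [partEnt_pst_eq_fut hfm hfm' hs hpres (T * (j + 1))]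
        ring
      rw [this, ih, Finset.sum_range_succ]
      ring

end Dyn2

end Stmt15Aux

namespace Stmt15Aux

open MeasurableSpace

variable {X : Type*} [MeasurableSpace X]
variable {ι : Type*} [Fintype ι] [MeasurableSpace ι] [MeasurableSingletonClass ι]

section Filt

variable {f : X ≃ X} {s : X → ι}
variable (hfm' : Measurable (⇑f.symm)) (hs : Measurable s)

include hfm' hs in
lemma pst_comap_mono : Monotone (fun m => MeasurableSpace.comap (pst f s m) ⊤) := by
  intro m m' hmm'
  have hcomp : pst f s m = (fun (v : Fin m' → ι) (i : Fin m) => v (Fin.castLE hmm' i))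
      ∘ pst f s m' := by
    funext x i
    rfl
  simp only [hcomp]
  rw [← MeasurableSpace.comap_comp]
  exact MeasurableSpace.comap_mono le_top

/-- The filtration of past σ-algebras. -/
def pastFiltration (f : X ≃ X) (s : X → ι) (hfm' : Measurable (⇑f.symm)) (hs : Measurable s) :
    MeasureTheory.Filtration ℕ ‹MeasurableSpace X› where
  seq := fun m => MeasurableSpace.comap (pst f s m) ⊤
  mono' := pst_comap_mono hfm' hs
  le' := fun m => comap_le_of_preimage (pst_preimage_measurable hfm' hs m)

lemma pastFiltration_apply (m : ℕ) :
    (pastFiltration f s hfm' hs) m = MeasurableSpace.comap (pst f s m) ⊤ := rfl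

lemma iSup_pastFiltration :
    (⨆ m, (pastFiltration f s hfm' hs) m)
      = ⨆ n : ℕ, MeasurableSpace.comap (fun y => s ((⇑f.symm)^[n + 1] y)) ⊤ := by
  apply le_antisymm
  · refine iSup_le fun m => ?_
    rintro S ⟨S', -, rfl⟩
    classical
    have hdec : pst f s m ⁻¹' S'
        = ⋃ v ∈ (Set.toFinite S').toFinset, ⋂ i : Fin m,
            (fun y => s ((⇑f.symm)^[(i : ℕ) + 1] y)) ⁻¹' {v i} := by
      ext x
      simp only [Set.mem_preimage, Set.mem_iUnion, Set.mem_iInter, Set.Finite.mem_toFinset,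
        Set.mem_singleton_iff, exists_prop]
      constructor
      · intro hx
        exact ⟨pst f s m x, hx, fun i => rfl⟩
      · rintro ⟨v, hv, hvx⟩
        have : pst f s m x = v := funext fun i => hvx i
        rw [this]
        exact hv
    rw [hdec]
    refine MeasurableSet.biUnion (Finset.countable_toSet _) fun v _ => ?_
    refine MeasurableSet.iInter fun i => ?_
    have hle : MeasurableSpace.comap (fun y => s ((⇑f.symm)^[(i : ℕ) + 1] y)) ⊤
        ≤ ⨆ n : ℕ, MeasurableSpace.comap (fun y => s ((⇑f.symm)^[n + 1] y)) ⊤ :=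
      le_iSup (fun n => MeasurableSpace.comap (fun y => s ((⇑f.symm)^[n + 1] y)) ⊤) (i : ℕ)
    exact hle _ ⟨{v i}, trivial, rfl⟩
  · refine iSup_le fun n => ?_
    have hcomp : (fun y => s ((⇑f.symm)^[n + 1] y))
        = (fun (v : Fin (n + 1) → ι) => v ⟨n, Nat.lt_succ_self n⟩) ∘ pst f s (n + 1) := by
      funext y
      rfl
    rw [hcomp, ← MeasurableSpace.comap_comp]
    refine le_trans (MeasurableSpace.comap_mono le_top) ?_
    exact le_iSup (fun m => (pastFiltration f s hfm' hs) m) (n + 1)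

end Filt

end Stmt15Aux

namespace Stmt15Aux

open MeasureTheory

variable {X : Type*} [MeasurableSpace X]
variable {ι : Type*} [Fintype ι] [MeasurableSpace ι] [MeasurableSingletonClass ι]

lemma condexp_indicator_Icc {Y : Type*} {m' : MeasurableSpace Y} {mY : MeasurableSpace Y}
    (μ : Measure Y) [IsProbabilityMeasure μ] {A : Set Y}
    (hA : MeasurableSet A) (hm : m' ≤ mY) :
    ∀ᵐ x ∂μ, 0 ≤ (μ[A.indicator (1 : Y → ℝ)|m']) x ∧ (μ[A.indicator (1 : Y → ℝ)|m']) x ≤ 1 := by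
  have h0 : 0 ≤ᵐ[μ] μ[A.indicator (1 : Y → ℝ)|m'] :=
    condExp_nonneg (Filter.Eventually.of_forall fun x => Set.indicator_nonneg (by simp) x)
  have h1 : μ[A.indicator (1 : Y → ℝ)|m'] ≤ᵐ[μ] μ[(fun _ => (1:ℝ))|m'] := by
    refine condExp_mono ((integrable_const (1:ℝ)).indicator hA) (integrable_const _)
      (Filter.Eventually.of_forall fun x => ?_)
    classical
    by_cases hx : x ∈ A <;> simp [Set.indicator_apply, hx]
  have hconst : μ[(fun _ => (1:ℝ))|m'] = fun _ => (1:ℝ) := condExp_const (μ := μ) hm (1:ℝ)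
  filter_upwards [h0, h1] with x hx0 hx1
  refine ⟨hx0, ?_⟩
  have := hx1
  rw [hconst] at this
  exact this

section Levy

variable {μ : Measure X} [IsProbabilityMeasure μ]
variable {f : X ≃ X} {s : X → ι}
variable (hfm : Measurable (⇑f)) (hfm' : Measurable (⇑f.symm)) (hs : Measurable s)

include hfm hfm' hs in
lemma tendsto_condEnt_pst (T : ℕ) :
    Filter.Tendsto (fun m => condEnt μ (fut f s T) (pst f s m)) Filter.atTop
      (𝓝 (∫ x, ∑ w : Fin T → ι, Real.negMulLog
        ((μ[(fut f s T ⁻¹' {w}).indicator (1 : X → ℝ) |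
          ⨆ n : ℕ, MeasurableSpace.comap (fun y => s ((⇑f.symm)^[n + 1] y)) ⊤]) x) ∂μ)) := by
  classical
  set ℱ := pastFiltration f s hfm' hs with hℱ
  have hWeq : (⨆ m, (ℱ m : MeasurableSpace X))
      = ⨆ n : ℕ, MeasurableSpace.comap (fun y => s ((⇑f.symm)^[n + 1] y)) ⊤ :=
    iSup_pastFiltration hfm' hs
  set gw : (Fin T → ι) → X → ℝ := fun w => (fut f s T ⁻¹' {w}).indicator (1 : X → ℝ) with hgw
  set F : ℕ → X → ℝ := fun m x => ∑ w : Fin T → ι, Real.negMulLog ((μ[gw w|ℱ m]) x) with hF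
  set FW : X → ℝ := fun x => ∑ w : Fin T → ι, Real.negMulLog
      ((μ[gw w|⨆ n : ℕ, MeasurableSpace.comap (fun y => s ((⇑f.symm)^[n + 1] y)) ⊤]) x) with hFW
  have hrepr : ∀ m, condEnt μ (fut f s T) (pst f s m) = ∫ x, F m x ∂μ := fun m =>
    (integral_condEnt μ (fut_preimage_measurable hfm hs T)
      (pst_preimage_measurable hfm' hs m)).symm
  have hmain : Filter.Tendsto (fun m => ∫ x, F m x ∂μ) Filter.atTop (𝓝 (∫ x, FW x ∂μ)) := by
    refine tendsto_integral_of_dominated_convergence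
      (fun _ => (Fintype.card (Fin T → ι) : ℝ)) ?_ (integrable_const _) ?_ ?_
    · intro m
      refine Measurable.aestronglyMeasurable ?_
      exact Finset.measurable_sum _ fun w _ =>
        Real.continuous_negMulLog.measurable.comp
          ((stronglyMeasurable_condExp.mono (ℱ.le m)).measurable)
    · intro m
      have hIcc : ∀ᵐ x ∂μ, ∀ w : Fin T → ι,
          0 ≤ (μ[gw w|ℱ m]) x ∧ (μ[gw w|ℱ m]) x ≤ 1 := by
        rw [ae_all_iff]
        intro w
        exact condexp_indicator_Icc μ (fut_preimage_measurable hfm hs T {w}) (ℱ.le m)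
      filter_upwards [hIcc] with x hx
      calc ‖F m x‖ ≤ ∑ w : Fin T → ι, ‖Real.negMulLog ((μ[gw w|ℱ m]) x)‖ := norm_sum_le _ _
        _ ≤ ∑ _w : Fin T → ι, (1:ℝ) := by
            refine Finset.sum_le_sum fun w _ => ?_
            exact abs_negMulLog_le_one (hx w).1 (hx w).2
        _ = (Fintype.card (Fin T → ι) : ℝ) := by simp
    · have hlev : ∀ᵐ x ∂μ, ∀ w : Fin T → ι,
          Filter.Tendsto (fun m => (μ[gw w|ℱ m]) x) Filter.atTop
            (𝓝 ((μ[gw w|⨆ n : ℕ, MeasurableSpace.comap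
              (fun y => s ((⇑f.symm)^[n + 1] y)) ⊤]) x)) := by
        rw [ae_all_iff]
        intro w
        have := MeasureTheory.tendsto_ae_condExp (ℱ := ℱ) (μ := μ) (gw w)
        rw [hWeq] at this
        exact this
      filter_upwards [hlev] with x hx
      refine tendsto_finset_sum _ fun w _ => ?_
      exact (Real.continuous_negMulLog.tendsto _).comp (hx w)
  have : (fun m => condEnt μ (fut f s T) (pst f s m)) = fun m => ∫ x, F m x ∂μ :=
    funext hrepr
  rw [this]
  exact hmain

end Levy

end Stmt15Aux

namespace Stmt15Aux

open MeasureTheory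

variable {X : Type*} [MeasurableSpace X]
variable {ι : Type*} [Fintype ι] [MeasurableSpace ι] [MeasurableSingletonClass ι]
variable {μ : Measure X} [IsProbabilityMeasure μ]
variable {f : X ≃ X} {s : X → ι}

lemma relEntropy_bddBelow (T' : X → X) :
    BddBelow (Set.range fun n : ℕ => ((n : ℝ) + 1)⁻¹ *
      ∑ w : Fin (n + 1) → ι, Real.negMulLog (μ (_root_.cylinder T' s (n + 1) w)).toReal) := by
  refine ⟨0, ?_⟩
  rintro y ⟨n, rfl⟩
  refine mul_nonneg (by positivity) (Finset.sum_nonneg fun w _ => ?_)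
  refine Real.negMulLog_nonneg ENNReal.toReal_nonneg ?_
  exact ENNReal.toReal_le_of_le_ofReal one_pos.le (by simpa using prob_le_one)

lemma relEntropy_le_partEnt_fut (m : ℕ) (hm : 1 ≤ m) :
    relEntropy (⇑f) μ s ≤ (m : ℝ)⁻¹ * partEnt μ (fut f s m) := by
  obtain ⟨k, rfl⟩ : ∃ k, m = k + 1 := ⟨m - 1, by omega⟩
  have h := ciInf_le (relEntropy_bddBelow (μ := μ) (s := s) (⇑f)) k
  refine le_trans h (le_of_eq ?_)
  have hsum : ∑ w : Fin (k + 1) → ι, Real.negMulLog (μ (_root_.cylinder (⇑f) s (k + 1) w)).toReal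
      = partEnt μ (fut f s (k + 1)) := by
    refine Finset.sum_congr rfl fun w _ => ?_
    rw [cylinder_eq_fut_preimage]
  rw [hsum]
  push_cast
  ring_nf

theorem relEntropy_le_condexp_integral
    (hfm : Measurable (⇑f)) (hfm' : Measurable (⇑f.symm)) (hs : Measurable s)
    (hpres : MeasurePreserving (⇑f) μ μ) (T : ℕ) (hT : 1 ≤ T) :
    relEntropy (⇑f) μ s ≤ (∫ x, ∑ w : Fin T → ι, Real.negMulLog
        ((μ[(_root_.cylinder (⇑f) s T w).indicator (1 : X → ℝ) |
          ⨆ n : ℕ, MeasurableSpace.comap (fun y => s ((⇑f.symm)^[n + 1] y)) ⊤]) x) ∂μ) / T := by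
  classical
  set CW := ∫ x, ∑ w : Fin T → ι, Real.negMulLog
      ((μ[(_root_.cylinder (⇑f) s T w).indicator (1 : X → ℝ) |
        ⨆ n : ℕ, MeasurableSpace.comap (fun y => s ((⇑f.symm)^[n + 1] y)) ⊤]) x) ∂μ with hCW
  have hCW' : CW = ∫ x, ∑ w : Fin T → ι, Real.negMulLog
      ((μ[(fut f s T ⁻¹' {w}).indicator (1 : X → ℝ) |
        ⨆ n : ℕ, MeasurableSpace.comap (fun y => s ((⇑f.symm)^[n + 1] y)) ⊤]) x) ∂μ := by
    rw [hCW]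
    congr 1
    funext x
    refine Finset.sum_congr rfl fun w _ => ?_
    rw [cylinder_eq_fut_preimage]
  -- the sequence of Cesàro-type averages
  set ws : ℕ → ℝ := fun i => if i = 0 then partEnt μ (fut f s T)
      else condEnt μ (fut f s T) (pst f s (T * i)) with hws
  have hterm : ∀ j : ℕ, relEntropy (⇑f) μ s
      ≤ ((T * (j + 1) : ℕ) : ℝ)⁻¹ * ∑ i ∈ Finset.range (j + 1), ws i := by
    intro j
    have h1 := relEntropy_le_partEnt_fut (μ := μ) (f := f) (s := s) (T * (j + 1))
      (Nat.one_le_iff_ne_zero.2 (Nat.mul_ne_zero (by omega) (by omega)))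
    refine le_trans h1 (le_of_eq ?_)
    congr 1
    rw [chain_rule hfm hfm' hs hpres T j, Finset.sum_range_succ']
    simp only [hws]
    have h2 : ∀ i ∈ Finset.range j, (if i + 1 = 0 then partEnt μ (fut f s T)
        else condEnt μ (fut f s T) (pst f s (T * (i + 1))))
        = condEnt μ (fut f s T) (pst f s (T * (i + 1))) := by
      intro i _
      simp
    rw [Finset.sum_congr rfl h2]
    simp [add_comm]
  -- limit of the averages
  have hwlim : Filter.Tendsto ws Filter.atTop (𝓝 CW) := by
    rw [← Filter.tendsto_add_atTop_iff_nat 1]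
    have hbase := tendsto_condEnt_pst (μ := μ) hfm hfm' hs T
    rw [← hCW'] at hbase
    have hcomp : Filter.Tendsto (fun i : ℕ => T * (i + 1)) Filter.atTop Filter.atTop := by
      refine Filter.tendsto_atTop_mono (fun i => ?_) Filter.tendsto_id
      calc (i : ℕ) ≤ i + 1 := Nat.le_succ i
        _ ≤ T * (i + 1) := Nat.le_mul_of_pos_left _ (by omega)
    have := hbase.comp hcomp
    refine this.congr fun i => ?_
    simp [hws]
  have hces : Filter.Tendsto (fun n : ℕ => (n : ℝ)⁻¹ * ∑ i ∈ Finset.range n, ws i)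
      Filter.atTop (𝓝 CW) := by
    have := hwlim.cesaro
    simpa [smul_eq_mul] using this
  have hces' : Filter.Tendsto (fun j : ℕ => ((T * (j + 1) : ℕ) : ℝ)⁻¹ *
      ∑ i ∈ Finset.range (j + 1), ws i) Filter.atTop (𝓝 (CW / T)) := by
    have h1 : Filter.Tendsto (fun j : ℕ => ((j + 1 : ℕ) : ℝ)⁻¹ *
        ∑ i ∈ Finset.range (j + 1), ws i) Filter.atTop (𝓝 CW) :=
      hces.comp (Filter.tendsto_add_atTop_nat 1)
    have h2 := h1.const_mul ((T : ℝ)⁻¹)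
    have heq : ∀ j : ℕ, (T:ℝ)⁻¹ * (((j + 1 : ℕ) : ℝ)⁻¹ * ∑ i ∈ Finset.range (j + 1), ws i)
        = ((T * (j + 1) : ℕ) : ℝ)⁻¹ * ∑ i ∈ Finset.range (j + 1), ws i := by
      intro j
      push_cast
      rw [mul_inv]
      ring
    have h3 := h2.congr heq
    rw [inv_mul_eq_div] at h3
    exact h3
  exact ge_of_tendsto' hces' hterm

end Stmt15Aux

namespace Stmt15Aux

variable {X : Type*} [MeasurableSpace X]
variable {ι : Type*} [Fintype ι] [MeasurableSpace ι] [MeasurableSingletonClass ι]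

/-- the unstable σ-algebra -/
def unstable (f : X ≃ X) (s : X → ι) : MeasurableSpace X :=
  ⨆ n : ℕ, MeasurableSpace.comap (fun y => s ((⇑f.symm)^[n + 1] y)) ⊤

end Stmt15Aux


/-- if, conditionally on the unstable σ-algebra `W = ⋁_{n≥1} fⁿQ`, at most
`C` cylinders of `Q^T` are charged at points of `M₁` and at most `e^{(h_top(f)+α)T}`
elsewhere, then `h(f,μ) ≤ μ(M₁)·(log C)/T + (1−μ(M₁))·(h_top(f)+α)`; in particular if
`μ(M₁) ≥ m₁` then `h(f,μ) ≤ h_top(f) − m₁·h_top(f) + α + (log C)/T`. -/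
theorem stmt_15 {M : Type*} [MetricSpace M] [CompactSpace M] [Nonempty M]
    [MeasurableSpace M] [BorelSpace M]
    (f : Equiv.Perm M) (hf : Continuous f) (hf' : Continuous f.symm)
    (htop : ℝ) (hhtop : coverEntropy (⇑f) Set.univ = (htop : EReal))
    (μ : Measure M) [IsProbabilityMeasure μ] (herg : Ergodic f μ)
    {ι : Type*} [Fintype ι] [MeasurableSpace ι] [MeasurableSingletonClass ι]
    (s : M → ι) (hs : Measurable s)
    -- `Q` computes the entropy of `μ` : `h(f,μ) = h(f,μ,Q)`, i.e. the relative entropy of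
    -- any other finite measurable partition is at most that of `Q`
    (hgen : ∀ {κ : Type} [Fintype κ] [MeasurableSpace κ] (t : M → κ), Measurable t →
      relEntropy (⇑f) μ t ≤ relEntropy (⇑f) μ s)
    (α : ℝ) (hα : 0 < α) (C : ℝ) (hC : 1 ≤ C)
    (M₁ : Set M) (hM₁ : MeasurableSet M₁) (T : ℕ) (hT : 1 ≤ T)
    (hcount₁ : ∀ x ∈ M₁,
      (Set.ncard {w : Fin T → ι | 0 < (μ[(cylinder (⇑f) s T w).indicator (1 : M → ℝ)|
        ⨆ n : ℕ, MeasurableSpace.comap (fun y => s ((⇑f.symm)^[n + 1] y)) ⊤]) x} : ℝ) ≤ C)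
    (hcount₂ : ∀ x ∉ M₁,
      (Set.ncard {w : Fin T → ι | 0 < (μ[(cylinder (⇑f) s T w).indicator (1 : M → ℝ)|
        ⨆ n : ℕ, MeasurableSpace.comap (fun y => s ((⇑f.symm)^[n + 1] y)) ⊤]) x} : ℝ)
        ≤ Real.exp ((htop + α) * T)) :
    relEntropy (⇑f) μ s ≤
        (μ M₁).toReal * Real.log C / T + (1 - (μ M₁).toReal) * (htop + α) ∧
      ∀ m₁ : ℝ, 0 < m₁ → m₁ ≤ (μ M₁).toReal →
        relEntropy (⇑f) μ s ≤ htop - m₁ * htop + α + Real.log C / T := by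
  
  classical
  have hfm : Measurable (⇑f) := hf.measurable
  have hfm' : Measurable (⇑f.symm) := hf'.measurable
  have hpres : MeasurePreserving (⇑f) μ μ := herg.toMeasurePreserving
  have hTpos : (0:ℝ) < T := by exact_mod_cast hT
  have hmW : Stmt15Aux.unstable f s ≤ ‹MeasurableSpace M› := by
    refine iSup_le fun n => Stmt15Aux.comap_le_of_preimage fun S => ?_
    exact (hs.comp (hfm'.iterate (n + 1))) ((Set.toFinite S).measurableSet)
  set g : (Fin T → ι) → M → ℝ :=
    fun w => μ[(cylinder (⇑f) s T w).indicator (1 : M → ℝ)| Stmt15Aux.unstable f s] with hg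
  set F : M → ℝ := fun x => ∑ w : Fin T → ι, Real.negMulLog (g w x) with hF
  -- step 1: master inequality
  have hmaster : relEntropy (⇑f) μ s ≤ (∫ x, F x ∂μ) / T :=
    Stmt15Aux.relEntropy_le_condexp_integral hfm hfm' hs hpres T hT
  -- step 2: a.e. facts about the conditional expectations
  have hcylmeas : ∀ w : Fin T → ι, MeasurableSet (cylinder (⇑f) s T w) := by
    intro w
    rw [Stmt15Aux.cylinder_eq_fut_preimage]
    exact Stmt15Aux.fut_preimage_measurable hfm hs T _
  have hIcc : ∀ᵐ x ∂μ, ∀ w : Fin T → ι, 0 ≤ g w x ∧ g w x ≤ 1 := by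
    rw [ae_all_iff]
    intro w
    exact Stmt15Aux.condexp_indicator_Icc μ (hcylmeas w) hmW
  have hsum1 : ∀ᵐ x ∂μ, ∑ w : Fin T → ι, g w x = 1 := by
    have hint : ∀ w ∈ (Finset.univ : Finset (Fin T → ι)),
        Integrable ((cylinder (⇑f) s T w).indicator (1 : M → ℝ)) μ := fun w _ =>
      (integrable_const (1:ℝ)).indicator (hcylmeas w)
    have h1 := (condExp_finset_sum hint (m := Stmt15Aux.unstable f s)).symm
    have h2 : (∑ w : Fin T → ι, (cylinder (⇑f) s T w).indicator (1 : M → ℝ))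
        = fun _ => (1:ℝ) := by
      funext x
      rw [Finset.sum_apply]
      have hrw : ∀ w : Fin T → ι, (cylinder (⇑f) s T w).indicator (1 : M → ℝ) x
          = ((Stmt15Aux.fut f s T) ⁻¹' {w}).indicator (fun _ => (1:ℝ)) x := fun w => by
        rw [Stmt15Aux.cylinder_eq_fut_preimage]
        rfl
      rw [Finset.sum_congr rfl fun w _ => hrw w,
        Stmt15Aux.sum_indicator_fiber (Stmt15Aux.fut f s T) (fun _ => (1:ℝ)) x]
    rw [h2] at h1
    have h3 : μ[(fun _ => (1:ℝ))|Stmt15Aux.unstable f s] = fun _ => 1 :=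
      condExp_const (μ := μ) hmW (1:ℝ)
    rw [h3] at h1
    filter_upwards [h1] with x hx
    simpa [Finset.sum_apply] using hx
  -- step 3: pointwise Gibbs bound
  have hcount₁' : ∀ x ∈ M₁, (Set.ncard {w : Fin T → ι | 0 < g w x} : ℝ) ≤ C := hcount₁
  have hcount₂' : ∀ x ∉ M₁, (Set.ncard {w : Fin T → ι | 0 < g w x} : ℝ)
      ≤ Real.exp ((htop + α) * T) := hcount₂
  set bnd : M → ℝ := fun x => M₁.indicator (fun _ => Real.log C) x
      + M₁ᶜ.indicator (fun _ => (htop + α) * T) x with hbnd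
  have hptws : ∀ᵐ x ∂μ, F x ≤ bnd x := by
    filter_upwards [hIcc, hsum1] with x hx hx1
    have hgibbs : F x ≤ Real.log (Set.ncard {w : Fin T → ι | 0 < g w x}) :=
      Stmt15Aux.sum_negMulLog_le_log_ncard (fun w => g w x) (fun w => (hx w).1) hx1
    have hN1 : 1 ≤ (Set.ncard {w : Fin T → ι | 0 < g w x} : ℝ) := by
      have hne : {w : Fin T → ι | 0 < g w x}.Nonempty := by
        by_contra hemp
        rw [Set.not_nonempty_iff_eq_empty] at hemp
        have hle : ∑ w : Fin T → ι, g w x ≤ 0 := by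
          refine Finset.sum_nonpos fun w _ => ?_
          by_contra hpos
          push_neg at hpos
          have hmem : w ∈ {w : Fin T → ι | 0 < g w x} := hpos
          rw [hemp] at hmem
          exact absurd hmem (Set.notMem_empty w)
        rw [hx1] at hle
        linarith
      have := (Set.ncard_pos (s := {w : Fin T → ι | 0 < g w x}) (Set.toFinite _)).2 hne
      exact_mod_cast this
    by_cases hxM : x ∈ M₁
    · have hbv : bnd x = Real.log C := by
        rw [hbnd]
        simp [Set.indicator_of_mem hxM, Set.indicator_of_notMem (by simpa using hxM :
          x ∉ M₁ᶜ)]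
      rw [hbv]
      exact hgibbs.trans (Real.log_le_log (by linarith) (hcount₁' x hxM))
    · have hbv : bnd x = (htop + α) * T := by
        rw [hbnd]
        simp [Set.indicator_of_notMem hxM, Set.indicator_of_mem (by simpa using hxM :
          x ∈ M₁ᶜ)]
      rw [hbv]
      refine hgibbs.trans ?_
      have h4 := Real.log_le_log (by linarith : (0:ℝ)
        < (Set.ncard {w : Fin T → ι | 0 < g w x} : ℝ)) (hcount₂' x hxM)
      rwa [Real.log_exp] at h4
  -- step 4: integrate
  have hFmeas : Measurable F := by
    refine Finset.measurable_sum _ fun w _ => ?_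
    exact Real.continuous_negMulLog.measurable.comp
      ((stronglyMeasurable_condExp.mono hmW).measurable)
  have hFint : Integrable F μ := by
    refine Integrable.mono' (integrable_const ((Fintype.card (Fin T → ι) : ℝ)))
      hFmeas.aestronglyMeasurable ?_
    filter_upwards [hIcc] with x hx
    calc ‖F x‖ ≤ ∑ w : Fin T → ι, ‖Real.negMulLog (g w x)‖ := norm_sum_le _ _
      _ ≤ ∑ _w : Fin T → ι, (1:ℝ) := Finset.sum_le_sum fun w _ =>
          Stmt15Aux.abs_negMulLog_le_one (hx w).1 (hx w).2
      _ = (Fintype.card (Fin T → ι) : ℝ) := by simp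
  have hbndint : Integrable bnd μ := by
    rw [hbnd]
    exact ((integrable_const _).indicator hM₁).add ((integrable_const _).indicator hM₁.compl)
  have hintle : ∫ x, F x ∂μ ≤ ∫ x, bnd x ∂μ := integral_mono_ae hFint hbndint hptws
  have hbndval : ∫ x, bnd x ∂μ
      = (μ M₁).toReal * Real.log C + (1 - (μ M₁).toReal) * ((htop + α) * T) := by
    rw [hbnd]
    rw [integral_add ((integrable_const _).indicator hM₁)
      ((integrable_const _).indicator hM₁.compl)]
    rw [integral_indicator_const _ hM₁, integral_indicator_const _ hM₁.compl]
    have hcompl : (μ M₁ᶜ).toReal = 1 - (μ M₁).toReal := by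
      rw [prob_compl_eq_one_sub hM₁,
        ENNReal.toReal_sub_of_le prob_le_one ENNReal.one_ne_top]
      simp
    rw [measureReal_def, measureReal_def, hcompl]
    simp only [smul_eq_mul]
  -- part 1
  have hmain : relEntropy (⇑f) μ s ≤
      (μ M₁).toReal * Real.log C / T + (1 - (μ M₁).toReal) * (htop + α) := by
    refine hmaster.trans ?_
    rw [div_le_iff₀ hTpos]
    calc ∫ x, F x ∂μ ≤ ∫ x, bnd x ∂μ := hintle
      _ = (μ M₁).toReal * Real.log C + (1 - (μ M₁).toReal) * ((htop + α) * T) := hbndval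
      _ = ((μ M₁).toReal * Real.log C / T + (1 - (μ M₁).toReal) * (htop + α)) * T := by
          field_simp
  refine ⟨hmain, fun m₁ hm₁pos hm₁le => ?_⟩
  -- part 2
  have hhtop0 : 0 ≤ htop := by
    have h0 := coverEntropy_nonneg (⇑f) (Set.univ_nonempty (α := M))
    rw [hhtop] at h0
    exact_mod_cast h0
  have ha0 : 0 ≤ (μ M₁).toReal := ENNReal.toReal_nonneg
  have ha1 : (μ M₁).toReal ≤ 1 :=
    ENNReal.toReal_le_of_le_ofReal one_pos.le (by simpa using prob_le_one)
  have hlogC : 0 ≤ Real.log C := Real.log_nonneg hC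
  refine hmain.trans ?_
  set a := (μ M₁).toReal
  have h1 : a * Real.log C / T ≤ Real.log C / T := by
    rw [div_le_div_iff₀ hTpos hTpos]
    nlinarith [mul_le_mul_of_nonneg_right ha1 (mul_nonneg hlogC hTpos.le)]
  have h2 : (1 - a) * htop ≤ (1 - m₁) * htop :=
    mul_le_mul_of_nonneg_right (by linarith) hhtop0
  have h3 : (1 - a) * α ≤ α := by nlinarith
  have hexp : (1 - a) * (htop + α) = (1 - a) * htop + (1 - a) * α := by ring
  have hexp2 : htop - m₁ * htop = (1 - m₁) * htop := by ring
  linarith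
end

section
/- Let P be a finite collection of pairwise disjoint open subsets of a compact metric space M with dense union, and suppose the total boundary ∂P := ⋃_{A∈P} ∂A is such that μ(∂P) = 0 for a given f-invariant probability measure μ lifted to two measures μ₁, μ₂ on Σ(f,P) via the coding map p. If p(A) = p(B) with A ≠ B in Σ(f,P), then there exists n ∈ ℤ with fⁿ(p(A)) ∈ ∂P. Consequently, if ν is an f-invariant measure with ν(∂P) = 0, then any two shift-invariant measures μ₁, μ₂ on Σ(f,P) with p_*μ₁ = p_*μ₂ = ν are equal. -/
open MeasureTheory

/-- if two distinct sequences of `Σ(f,P)` have the same image under the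
coding map `p`, then some iterate of the image point lies on the total boundary
`∂P = ⋃ᵢ ∂(P i)`. Consequently, two shift-invariant measures on `Σ(f,P)` projecting to the
same `f`-invariant measure `ν` with `ν(∂P) = 0` are equal. -/
theorem stmt_16 {M : Type*} [MetricSpace M] [CompactSpace M]
    [MeasurableSpace M] [BorelSpace M]
    (f : Equiv.Perm M) (hf : Continuous f) (hf' : Continuous f.symm)
    (ι : Type*) [Fintype ι] [MeasurableSpace ι] [MeasurableSingletonClass ι]
    (P : ι → Set M)
    (hopen : ∀ i, IsOpen (P i))
    (hdisj : ∀ i j, i ≠ j → Disjoint (P i) (P j))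
    (hdense : Dense (⋃ i, P i))
    (Sig : Set (ℤ → ι))
    (hSig : Sig = {A : ℤ → ι | ∀ n m : ℤ, n ≤ m →
      (⋂ k ∈ Set.Icc n m, (⇑(f ^ (k - n)) ⁻¹' P (A k))).Nonempty})
    (p : (ℤ → ι) → M)
    (hp : ∀ A ∈ Sig, (⋂ n : ℤ, ⇑(f ^ n) ⁻¹' closure (P (A n))) = {p A})
    (σ : (ℤ → ι) → ℤ → ι) (hσ : σ = fun A n => A (n + 1)) :
    (∀ A ∈ Sig, ∀ B ∈ Sig, p A = p B → A ≠ B →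
      ∃ n : ℤ, (f ^ n) (p A) ∈ ⋃ i, frontier (P i)) ∧
    ∀ (ν : Measure M), IsProbabilityMeasure ν → ν.map f = ν →
      ν (⋃ i, frontier (P i)) = 0 →
      ∀ μ₁ μ₂ : Measure (ℤ → ι), IsProbabilityMeasure μ₁ → IsProbabilityMeasure μ₂ →
        μ₁.map σ = μ₁ → μ₂.map σ = μ₂ → μ₁ Sigᶜ = 0 → μ₂ Sigᶜ = 0 →
        μ₁.map p = ν → μ₂.map p = ν → μ₁ = μ₂ := by
  classical
  -- continuity of all integer powers of `f`
  have contz : ∀ n : ℤ, Continuous ⇑(f ^ n) := by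
    intro n
    induction n using Int.induction_on with
    | zero => simpa using continuous_id
    | succ k ih =>
        have h : f ^ ((k : ℤ) + 1) = f ^ (k : ℤ) * f := zpow_add_one f k
        rw [h, Equiv.Perm.coe_mul]
        exact ih.comp hf
    | pred k ih =>
        have h : f ^ (-(k : ℤ) - 1) = f ^ (-(k : ℤ)) * f⁻¹ := zpow_sub_one f _
        rw [h, Equiv.Perm.coe_mul]
        have : ⇑(f⁻¹) = ⇑f.symm := rfl
        rw [this]
        exact ih.comp hf'
  -- membership of iterates in closures
  have hmem : ∀ A ∈ Sig, ∀ n : ℤ, (f ^ n) (p A) ∈ closure (P (A n)) := by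
    intro A hA n
    have h1 : p A ∈ ⋂ n : ℤ, ⇑(f ^ n) ⁻¹' closure (P (A n)) := by
      rw [hp A hA]; exact rfl
    exact Set.mem_iInter.1 h1 n
  -- disjoint open sets are disjoint from closures
  have hclo : ∀ i j : ι, i ≠ j → ∀ x, x ∈ P i → x ∉ closure (P j) := by
    intro i j hij x hx hxc
    have hsub : closure (P j) ⊆ (P i)ᶜ :=
      closure_minimal ((hdisj i j hij).subset_compl_left) (isClosed_compl_iff.2 (hopen i))
    exact hsub hxc hx
  constructor
  · -- Part 1
    intro A hA B hB hpe hne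
    have hex : ∃ n : ℤ, A n ≠ B n := by
      by_contra h; push_neg at h; exact hne (funext h)
    obtain ⟨n, hn⟩ := hex
    refine ⟨n, Set.mem_iUnion.2 ⟨A n, ?_⟩⟩
    have h1 := hmem A hA n
    have h2 := hmem B hB n
    rw [← hpe] at h2
    rw [(hopen (A n)).frontier_eq]
    refine ⟨h1, fun hin => ?_⟩
    exact hclo (A n) (B n) hn _ hin h2
  · -- Part 2
    intro ν hν hνf hnub μ₁ μ₂ hμ₁ hμ₂ _ _ hS1 hS2 hm1 hm2
    rcases isEmpty_or_nonempty ι with hι | hι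
    · exfalso
      have he : IsEmpty (ℤ → ι) := ⟨fun A => hι.false (A 0)⟩
      have h0 : (Set.univ : Set (ℤ → ι)) = ∅ := Set.univ_eq_empty_iff.2 he
      have h1 := hμ₁.measure_univ
      rw [h0] at h1
      simp at h1
    -- total boundary and bad set
    set B0 : Set M := ⋃ i, frontier (P i) with hB0def
    have hB0 : MeasurableSet B0 :=
      MeasurableSet.iUnion fun i => isClosed_frontier.measurableSet
    -- invariance of ν under all powers
    have hνs : ν.map ⇑f.symm = ν := by
      conv_lhs => rw [← hνf]
      rw [Measure.map_map hf'.measurable hf.measurable]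
      simp [Equiv.symm_comp_self]
    have νinv : ∀ n : ℤ, ν.map ⇑(f ^ n) = ν := by
      intro n
      induction n using Int.induction_on with
      | zero => simpa using Measure.map_id
      | succ k ih =>
          have h : f ^ ((k : ℤ) + 1) = f ^ (k : ℤ) * f := zpow_add_one f k
          rw [h, Equiv.Perm.coe_mul,
            ← Measure.map_map (contz k).measurable hf.measurable, hνf, ih]
      | pred k ih =>
          have h : f ^ (-(k : ℤ) - 1) = f ^ (-(k : ℤ)) * f⁻¹ := zpow_sub_one f _
          have hc : ⇑(f⁻¹) = ⇑f.symm := rfl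
          rw [h, Equiv.Perm.coe_mul, hc,
            ← Measure.map_map (contz (-(k:ℤ))).measurable hf'.measurable, hνs, ih]
    have νpre : ∀ (n : ℤ) (s : Set M), MeasurableSet s → ν (⇑(f ^ n) ⁻¹' s) = ν s := by
      intro n s hs
      conv_rhs => rw [← νinv n]
      rw [Measure.map_apply (contz n).measurable hs]
    set Bad : Set M := ⋃ n : ℤ, ⇑(f ^ n) ⁻¹' B0 with hBaddef
    have hBad : MeasurableSet Bad :=
      MeasurableSet.iUnion fun n => hB0.preimage (contz n).measurable
    have hBad0 : ν Bad = 0 :=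
      measure_iUnion_null fun n => by rw [νpre n _ hB0]; exact hnub
    -- good points
    have good : ∀ A ∈ Sig, p A ∉ Bad → ∀ n : ℤ, (f ^ n) (p A) ∈ P (A n) := by
      intro A hA hB n
      have h1 := hmem A hA n
      have h2 : (f ^ n) (p A) ∉ frontier (P (A n)) := by
        intro h
        exact hB (Set.mem_iUnion.2 ⟨n, Set.mem_preimage.2 (Set.mem_iUnion.2 ⟨A n, h⟩)⟩)
      rw [(hopen (A n)).frontier_eq] at h2
      by_contra hc
      exact h2 ⟨h1, hc⟩
    -- key computation for cylinder sets
    have key : ∀ (μ : Measure (ℤ → ι)), IsProbabilityMeasure μ → μ Sigᶜ = 0 →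
        μ.map p = ν → ∀ (s : Finset ℤ) (c : ℤ → ι),
        μ {A : ℤ → ι | ∀ n ∈ s, A n = c n} = ν (⋂ n ∈ s, ⇑(f ^ n) ⁻¹' P (c n)) := by
      intro μ hμ hSc hmap s c
      have hpm : AEMeasurable p μ := by
        by_contra h
        rw [Measure.map_of_not_aemeasurable h] at hmap
        have := hν.measure_univ
        rw [← hmap] at this
        simp at this
      set T : Set M := ⋂ n ∈ s, ⇑(f ^ n) ⁻¹' P (c n) with hTdef
      have hT : MeasurableSet T :=
        MeasurableSet.biInter s.countable_toSet fun n _ =>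
          ((hopen (c n)).preimage (contz n)).measurableSet
      have hN : μ (Sigᶜ ∪ p ⁻¹' Bad) = 0 := by
        refine measure_union_null hSc ?_
        have : μ (p ⁻¹' Bad) = ν Bad := by
          rw [← hmap, Measure.map_apply_of_aemeasurable hpm hBad]
        rw [this]; exact hBad0
      have hsub1 : {A : ℤ → ι | ∀ n ∈ s, A n = c n} \ p ⁻¹' T ⊆ Sigᶜ ∪ p ⁻¹' Bad := by
        intro A hA
        by_contra h
        simp only [Set.mem_union, Set.mem_compl_iff, not_or, not_not] at h
        obtain ⟨hASig, hABad⟩ := h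
        refine hA.2 (Set.mem_iInter₂.2 fun n hn => ?_)
        refine Set.mem_preimage.2 ?_
        rw [← hA.1 n hn]
        exact good A hASig hABad n
      have hsub2 : p ⁻¹' T \ {A : ℤ → ι | ∀ n ∈ s, A n = c n} ⊆ Sigᶜ ∪ p ⁻¹' Bad := by
        intro A hA
        by_contra h
        simp only [Set.mem_union, Set.mem_compl_iff, not_or, not_not] at h
        obtain ⟨hASig, hABad⟩ := h
        refine hA.2 fun n hn => ?_
        by_contra hne
        have h1 : (f ^ n) (p A) ∈ P (c n) := Set.mem_iInter₂.1 hA.1 n hn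
        have h2 : (f ^ n) (p A) ∈ P (A n) := good A hASig hABad n
        exact (hdisj (A n) (c n) hne).le_bot ⟨h2, h1⟩
      have hae : {A : ℤ → ι | ∀ n ∈ s, A n = c n} =ᵐ[μ] p ⁻¹' T :=
        MeasureTheory.ae_eq_set.2 ⟨measure_mono_null hsub1 hN, measure_mono_null hsub2 hN⟩
      rw [measure_congr hae, ← Measure.map_apply_of_aemeasurable hpm hT, hmap]
    -- conclude by the π-system of measurable cylinders
    refine ext_of_generate_finite _ generateFrom_measurableCylinders.symm
      isPiSystem_measurableCylinders ?_
      (by rw [hμ₁.measure_univ, hμ₂.measure_univ])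
    intro t ht
    obtain ⟨s, S, hSmeas, rfl⟩ := (mem_measurableCylinders t).1 ht
    have Sfin : S.Finite := Set.toFinite S
    have hdecomp : (cylinder s S : Set (ℤ → ι)) =
        ⋃ y ∈ Sfin.toFinset, cylinder s ({y} : Set (∀ i : ↥s, ι)) := by
      ext A
      simp only [mem_cylinder, Set.mem_iUnion, Set.Finite.mem_toFinset,
        Set.mem_singleton_iff]
      exact ⟨fun h => ⟨_, h, rfl⟩, fun ⟨y, hy, h⟩ => h ▸ hy⟩
    have hdisjc : (Sfin.toFinset : Set (∀ i : s, ι)).PairwiseDisjoint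
        (fun y => (cylinder s {y} : Set (ℤ → ι))) := by
      intro y _ y' _ hyy'
      refine Set.disjoint_left.2 fun A hA hA' => ?_
      simp only [mem_cylinder, Set.mem_singleton_iff] at hA hA'
      exact hyy' (hA ▸ hA')
    have hmeasc : ∀ y ∈ Sfin.toFinset, MeasurableSet (cylinder s {y} : Set (ℤ → ι)) := by
      intro y _
      exact MeasurableSet.of_mem_measurableCylinders
        (cylinder_mem_measurableCylinders (α := fun _ : ℤ => ι) s ({y} : Set (∀ i : ↥s, ι)) (MeasurableSet.singleton y))
    have hsame : ∀ y : (∀ i : s, ι), ∀ μ : Measure (ℤ → ι), IsProbabilityMeasure μ →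
        μ Sigᶜ = 0 → μ.map p = ν →
        μ (cylinder s ({y} : Set (∀ i : ↥s, ι))) = ν (⋂ n ∈ s, ⇑(f ^ n) ⁻¹'
          P (if h : n ∈ s then y ⟨n, h⟩ else Classical.arbitrary ι)) := by
      intro y μ hμ hSc hmap
      have hcyl : (cylinder s ({y} : Set (∀ i : ↥s, ι)) : Set (ℤ → ι)) =
          {A : ℤ → ι | ∀ n ∈ s, A n =
            (fun n => if h : n ∈ s then y ⟨n, h⟩ else Classical.arbitrary ι) n} := by
        ext A
        simp only [mem_cylinder, Set.mem_singleton_iff, Set.mem_setOf_eq,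
          funext_iff, Finset.restrict, Subtype.forall]
        constructor
        · intro h n hn; rw [dif_pos hn]; exact h n hn
        · intro h n hn; have := h n hn; rwa [dif_pos hn] at this
      rw [hcyl]
      exact key μ hμ hSc hmap s _
    rw [hdecomp, measure_biUnion_finset hdisjc hmeasc, measure_biUnion_finset hdisjc hmeasc]
    refine Finset.sum_congr rfl fun y hy => ?_
    rw [hsame y μ₁ hμ₁ hS1 hm1, hsame y μ₂ hμ₂ hS2 hm2]
end
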